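/- arXiv:1611.07886 — 6 statements merged into one kernel-verified Lean document; each statement's English description precedes it below -/
import Mathlib

section
/- Let C be a topos. Let Y be an object, let s : S' ↣ S and t : T' ↣ T be monomorphisms, and let y_{S'} : Y → S', y_{T'} : Y → T', y_S : Y → S, y_T : Y → T be morphisms with s ∘ y_{S'} = y_S and t ∘ y_{T'} = y_T. Then the canonical morphism S' +_Y T' → S +_Y T between the pushouts, induced by s and t via the universal property of the pushout, is a monomorphism. -/
open CategoryTheory CategoryTheory.Limits

universe v u

/-- A category (with a terminal object) has a subobject classifier if there is a morphism
`truth : ⊤_ C ⟶ Ω` such that every monomorphism is a pullback of `truth` along a unique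
characteristic morphism. -/
class HasSubobjectClassifier (C : Type u) [Category.{v} C] [HasTerminal C] : Prop where
  exists_classifier : ∃ (Ω : C) (truth : ⊤_ C ⟶ Ω), ∀ {U X : C} (m : U ⟶ X), Mono m →
    ∃! χ : X ⟶ Ω, IsPullback m (terminal.from U) χ truth

/-- A topos is a category with finite limits that is cartesian closed and has a
subobject classifier. -/
class IsTopos (C : Type u) [Category.{v} C] extends HasFiniteLimits C : Prop where
  cartesianClosed : ∀ X : C, (prod.functor.obj X).IsLeftAdjoint
  hasSubobjectClassifier : _root_.HasSubobjectClassifier C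

section Aux

variable {𝒞 : Type u} [Category.{v} 𝒞]

/-- Any morphism out of a terminal object is a monomorphism. -/
lemma aux_mono_from_terminal [HasTerminal 𝒞] {X : 𝒞} (f : (⊤_ 𝒞) ⟶ X) : Mono f :=
  ⟨fun a b _ => Subsingleton.elim a b⟩

/-- The square with `𝟙` on the left and a mono `m` on the right is a pullback. -/
lemma aux_isPullback_id_mono {U A B : 𝒞} (u : U ⟶ A) (m : A ⟶ B) [Mono m] :
    IsPullback u (𝟙 U) m (u ≫ m) := by
  refine IsPullback.of_isLimit (PullbackCone.IsLimit.mk (by simp)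
    (fun s => s.snd) (fun s => ?_) (fun s => by simp) (fun s l _ h2 => by simpa using h2))
  rw [← cancel_mono m, Category.assoc]
  exact s.condition.symm

/-- The subobject classifier is an injective object: any morphism to `Ω` extends
along a monomorphism. -/
lemma aux_omega_inj [HasFiniteLimits 𝒞] {Ω : 𝒞} {truth : ⊤_ 𝒞 ⟶ Ω}
    (cls : ∀ {U X : 𝒞} (m : U ⟶ X), Mono m →
      ∃! χ : X ⟶ Ω, IsPullback m (terminal.from U) χ truth)
    {A B : 𝒞} (m : A ⟶ B) [Mono m] (g : A ⟶ Ω) : ∃ k : B ⟶ Ω, m ≫ k = g := by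
  haveI : Mono truth := aux_mono_from_terminal truth
  set u : pullback g truth ⟶ A := pullback.fst g truth with hu
  haveI : Mono u := inferInstanceAs (Mono (pullback.fst g truth))
  have hU : IsPullback u (terminal.from _) g truth := by
    have := IsPullback.of_hasPullback g truth
    rwa [show pullback.snd g truth = terminal.from _ from Subsingleton.elim _ _] at this
  haveI : Mono (u ≫ m) := mono_comp u m
  obtain ⟨χ, hχ, -⟩ := cls (u ≫ m) inferInstance
  have big : IsPullback u (terminal.from _) (m ≫ χ) truth := by
    have := (aux_isPullback_id_mono u m).paste_vert hχ
    rwa [Category.id_comp] at this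
  obtain ⟨c, -, huniq⟩ := cls u inferInstance
  exact ⟨χ, (huniq _ big).trans (huniq g hU).symm⟩

lemma aux_mono_prod_map [HasBinaryProducts 𝒞] {A B : 𝒞} (X : 𝒞) (m : A ⟶ B) [Mono m] :
    Mono (prod.map (𝟙 X) m) := by
  constructor
  intro Z a b hab
  apply Limits.prod.hom_ext
  · have := hab =≫ prod.fst
    simpa using this
  · have := hab =≫ prod.snd
    rw [Category.assoc, Category.assoc, prod.map_snd, ← Category.assoc, ← Category.assoc,
      cancel_mono m] at this
    exact this

/-- Key lemma: in a topos, the pushout of a monomorphism along any morphism is a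
monomorphism. -/
lemma aux_mono_of_isPushout [IsTopos 𝒞] {A B C P : 𝒞}
    (m : A ⟶ B) (f : A ⟶ C) (h : B ⟶ P) (i : C ⟶ P) [Mono m]
    (sq : IsPushout m f h i) : Mono i := by
  obtain ⟨Ω, truth, cls⟩ := (IsTopos.hasSubobjectClassifier (C := 𝒞)).exists_classifier
  obtain ⟨R, ⟨adj⟩⟩ := (IsTopos.cartesianClosed (C := 𝒞) C).exists_rightAdjoint
  set F := prod.functor.obj C with hF
  -- the diagonal of `C` and its characteristic morphism
  set Δ : C ⟶ C ⨯ C := prod.lift (𝟙 C) (𝟙 C) with hΔ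
  haveI : Mono Δ := by
    have : Mono (Δ ≫ prod.fst) := by rw [hΔ, prod.lift_fst]; infer_instance
    exact mono_of_mono Δ prod.fst
  obtain ⟨χΔ, hχΔ, -⟩ := cls Δ inferInstance
  -- the "singleton" morphism `η : C ⟶ R Ω` is a monomorphism
  set η : C ⟶ R.obj Ω := (adj.homEquiv C Ω) χΔ with hη
  haveI : Mono η := by
    constructor
    intro X a b hab
    have hab' : prod.map (𝟙 C) a ≫ χΔ = prod.map (𝟙 C) b ≫ χΔ := by
      have h0 := congrArg (adj.homEquiv X Ω).symm
        (show a ≫ (adj.homEquiv C Ω) χΔ = b ≫ (adj.homEquiv C Ω) χΔ from hab)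
      rw [Adjunction.homEquiv_naturality_left_symm,
        Adjunction.homEquiv_naturality_left_symm, (adj.homEquiv C Ω).symm_apply_apply χΔ] at h0
      exact h0
    have key : prod.lift a b ≫ χΔ = terminal.from X ≫ truth := by
      have h1 : prod.lift a (𝟙 X) ≫ prod.map (𝟙 C) a = a ≫ Δ := by
        simp [hΔ, prod.comp_lift]
      have h2 : prod.lift a (𝟙 X) ≫ prod.map (𝟙 C) b = prod.lift a b := by
        simp
      calc prod.lift a b ≫ χΔ = prod.lift a (𝟙 X) ≫ prod.map (𝟙 C) b ≫ χΔ := by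
            rw [← Category.assoc, h2]
        _ = prod.lift a (𝟙 X) ≫ prod.map (𝟙 C) a ≫ χΔ := by rw [hab']
        _ = a ≫ Δ ≫ χΔ := by rw [← Category.assoc, h1, Category.assoc]
        _ = a ≫ terminal.from C ≫ truth := by rw [hχΔ.w]
        _ = terminal.from X ≫ truth := by
            rw [← Category.assoc]; congr 1; exact Subsingleton.elim _ _
    have w := hχΔ.lift_fst (prod.lift a b) (terminal.from X) key
    have ha : hχΔ.lift (prod.lift a b) (terminal.from X) key = a := by
      have := w =≫ prod.fst
      have hf : Δ ≫ prod.fst = 𝟙 C := by rw [hΔ, prod.lift_fst]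
      rw [Category.assoc, hf, Category.comp_id, prod.lift_fst] at this
      exact this
    have hb : hχΔ.lift (prod.lift a b) (terminal.from X) key = b := by
      have := w =≫ prod.snd
      simp only [hΔ, Category.assoc, prod.lift_snd, Category.comp_id] at this
      simpa using this
    exact ha.symm.trans hb
  -- extend the partial map `(m, f ≫ η)` to `B`
  haveI : Mono (F.map m) := aux_mono_prod_map (𝒞 := 𝒞) C m
  obtain ⟨k, hk⟩ := aux_omega_inj cls (F.map m) (F.map f ≫ χΔ)
  set φ : B ⟶ R.obj Ω := (adj.homEquiv B Ω) k with hφ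
  have hcomm : m ≫ φ = f ≫ η := by
    rw [hφ, hη, ← Adjunction.homEquiv_naturality_left, ← adj.homEquiv_naturality_left f χΔ, hk]
  -- conclude
  have : Mono (i ≫ sq.desc φ η hcomm) := by
    rw [sq.inr_desc]; infer_instance
  exact mono_of_mono i (sq.desc φ η hcomm)

end Aux

/-- In a topos, given monomorphisms `s : S' ↣ S`, `t : T' ↣ T` and
morphisms from `Y` with `s ∘ y_{S'} = y_S` and `t ∘ y_{T'} = y_T`, the canonical morphism
`S' +_Y T' ⟶ S +_Y T` between the pushouts induced by `s` and `t` is a monomorphism. -/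
theorem stmt1 {𝒞 : Type u} [Category.{v} 𝒞] [IsTopos 𝒞] [HasFiniteColimits 𝒞]
    {Y S S' T T' : 𝒞} (s : S' ⟶ S) (t : T' ⟶ T) [Mono s] [Mono t]
    (yS' : Y ⟶ S') (yT' : Y ⟶ T') (yS : Y ⟶ S) (yT : Y ⟶ T)
    (hs : yS' ≫ s = yS) (ht : yT' ≫ t = yT) :
    Mono (pushout.map yS' yT' yS yT s t (𝟙 Y)
      (by rw [hs, Category.id_comp]) (by rw [ht, Category.id_comp])) := by
  -- the two intermediate comparison maps
  set map₁ : pushout yS' yT' ⟶ pushout yS yT' :=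
    pushout.map yS' yT' yS yT' s (𝟙 T') (𝟙 Y) (by rw [hs, Category.id_comp]) (by simp)
    with hmap₁
  set map₂ : pushout yS yT' ⟶ pushout yS yT :=
    pushout.map yS yT' yS yT (𝟙 S) t (𝟙 Y) (by simp) (by rw [ht, Category.id_comp])
    with hmap₂
  -- `map₁` is the pushout of `s` along `pushout.inl`
  have sq1 : IsPushout s (pushout.inl yS' yT') (pushout.inl yS yT') map₁ := by
    have big : IsPushout (yS' ≫ s) yT' (pushout.inl yS yT') (pushout.inr yS' yT' ≫ map₁) := by
      rw [hs, show pushout.inr yS' yT' ≫ map₁ = pushout.inr yS yT' from (pushout.inr_desc _ _ _).trans (Category.id_comp _)]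
      exact IsPushout.of_hasPushout _ _
    exact IsPushout.of_left big (pushout.inl_desc _ _ _).symm (IsPushout.of_hasPushout yS' yT')
  -- `map₂` is the pushout of `t` along `pushout.inr`
  have sq2 : IsPushout t (pushout.inr yS yT') (pushout.inr yS yT) map₂ := by
    have big : IsPushout (yT' ≫ t) yS (pushout.inr yS yT) (pushout.inl yS yT' ≫ map₂) := by
      rw [ht, show pushout.inl yS yT' ≫ map₂ = pushout.inl yS yT from (pushout.inl_desc _ _ _).trans (Category.id_comp _)]
      exact (IsPushout.of_hasPushout yS yT).flip
    exact IsPushout.of_left big (pushout.inr_desc _ _ _).symm (IsPushout.of_hasPushout yS yT').flip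
  haveI : Mono map₁ := aux_mono_of_isPushout s (pushout.inl yS' yT') (pushout.inl yS yT') map₁ sq1
  haveI : Mono map₂ := aux_mono_of_isPushout t (pushout.inr yS yT') (pushout.inr yS yT) map₂ sq2
  have : pushout.map yS' yT' yS yT s t (𝟙 Y)
      (by rw [hs, Category.id_comp]) (by rw [ht, Category.id_comp]) = map₁ ≫ map₂ := by
    apply pushout.hom_ext
    · rw [← Category.assoc]
      exact (pushout.inl_desc _ _ _).trans (((congrArg (· ≫ map₂) (pushout.inl_desc _ _ _)).trans (by rw [Category.assoc]; exact congrArg (s ≫ ·) ((pushout.inl_desc _ _ _).trans (Category.id_comp _)))).symm)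
    · rw [← Category.assoc]
      exact (pushout.inr_desc _ _ _).trans (((congrArg (· ≫ map₂) (pushout.inr_desc _ _ _)).trans (by rw [Category.assoc]; exact (Category.id_comp _).trans (pushout.inr_desc _ _ _))).symm)
  rw [this]
  exact mono_comp map₁ map₂
end

section
/- Let C be a topos. Fix an object Y, monomorphisms s' : S' ↣ S, s'' : S'' ↣ S, t' : T' ↣ T, t'' : T'' ↣ T, and morphisms y_{S'} : Y → S', y_{S''} : Y → S'', y_{T'} : Y → T', y_{T''} : Y → T'' satisfying s' ∘ y_{S'} = s'' ∘ y_{S''} and t' ∘ y_{T'} = t'' ∘ y_{T''}. Write y_S := s' ∘ y_{S'} and y_T := t' ∘ y_{T'}. Form A_Y := (S' ×_S S'') +_Y (T' ×_T T'') using the induced morphisms from Y into the two pullbacks, the pushouts S' +_Y T', S'' +_Y T'', S +_Y T, and the pullback B_Y := (S' +_Y T') ×_{S +_Y T} (S'' +_Y T'') along the canonical morphisms S' +_Y T' → S +_Y T and S'' +_Y T'' → S +_Y T. Then the canonical morphism θ_Y : A_Y → B_Y, induced by the universal properties of the pushout A_Y and the pullback B_Y, is a monomorphism. -/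
open CategoryTheory CategoryTheory.Limits

universe v u

attribute [simp] prod.lift_fst prod.lift_snd prod.lift_fst_assoc prod.lift_snd_assoc pullback.lift_fst pullback.lift_snd pullback.lift_fst_assoc pullback.lift_snd_assoc pushout.inl_desc pushout.inr_desc pushout.inl_desc_assoc pushout.inr_desc_assoc

section Aux

variable {𝒞 : Type u} [Category.{v} 𝒞] [IsTopos 𝒞]

/-- The graph-style pullback square for the diagonal. -/
lemma aux_pb1 {Y Z : 𝒞} (k : Y ⟶ Z) :
    IsPullback (prod.lift k (𝟙 Y)) k (prod.map (𝟙 Z) k) (prod.lift (𝟙 Z) (𝟙 Z)) := by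
  have w : CommSq (prod.lift k (𝟙 Y)) k (prod.map (𝟙 Z) k) (prod.lift (𝟙 Z) (𝟙 Z)) :=
    ⟨by ext <;> simp⟩
  refine IsPullback.of_isLimit' w
    (PullbackCone.IsLimit.mk _ (fun s => s.fst ≫ prod.snd) ?_ ?_ ?_)
  · intro s
    have h1 := congrArg (· ≫ (prod.fst : Z ⨯ Z ⟶ Z)) s.condition
    have h2 := congrArg (· ≫ (prod.snd : Z ⨯ Z ⟶ Z)) s.condition
    simp only [Category.assoc, prod.map_fst, prod.map_snd, prod.lift_fst, prod.lift_snd,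
      Category.comp_id, Category.id_comp] at h1 h2
    ext
    · simp only [Category.assoc, prod.lift_fst, prod.lift_snd, Category.comp_id]
      rw [h2, ← h1]
    · simp
  · intro s
    have h2 := congrArg (· ≫ (prod.snd : Z ⨯ Z ⟶ Z)) s.condition
    simpa using h2
  · intro s m' hm' _
    have := congrArg (· ≫ (prod.snd : Z ⨯ Y ⟶ Y)) hm'
    simpa using this

/-- The graph-style pullback square for a mono `m`. -/
lemma aux_pb2 {Y Z T : 𝒞} (k : Y ⟶ Z) (m : Y ⟶ T) [Mono m] :
    IsPullback (prod.lift k (𝟙 Y)) (𝟙 Y) (prod.map (𝟙 Z) m) (prod.lift k m) := by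
  have w : CommSq (prod.lift k (𝟙 Y)) (𝟙 Y) (prod.map (𝟙 Z) m) (prod.lift k m) :=
    ⟨by ext <;> simp⟩
  refine IsPullback.of_isLimit' w
    (PullbackCone.IsLimit.mk _ (fun s => s.snd) ?_ ?_ ?_)
  · intro s
    have h1 := congrArg (· ≫ (prod.fst : Z ⨯ T ⟶ Z)) s.condition
    have h2 := congrArg (· ≫ (prod.snd : Z ⨯ T ⟶ T)) s.condition
    simp only [Category.assoc, prod.map_fst, prod.map_snd, prod.lift_fst, prod.lift_snd,
      Category.comp_id, Category.id_comp] at h1 h2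
    have h2' : s.fst ≫ prod.snd = s.snd := by
      rw [← cancel_mono m]; simpa using h2
    ext
    · simp only [Category.assoc, prod.lift_fst, prod.lift_snd, Category.comp_id]
      exact h1.symm
    · simp only [Category.assoc, prod.lift_fst, prod.lift_snd, Category.comp_id]
      exact h2'.symm
  · intro s; simp
  · intro s m' _ hm'
    simpa using hm'

/-- Partial-map-classifier style square: any mono `m` and any map `k` with common domain fit
into a commutative square whose side opposite `m` is a mono. -/
lemma pmc {Y T Z : 𝒞} (m : Y ⟶ T) [Mono m] (k : Y ⟶ Z) :
    ∃ (W : 𝒞) (η : Z ⟶ W) (φ : T ⟶ W), Mono η ∧ k ≫ η = m ≫ φ := by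
  obtain ⟨Ω, tr, hcls⟩ := (IsTopos.hasSubobjectClassifier (C := 𝒞)).exists_classifier
  replace hcls : ∀ {U X : 𝒞} (m : U ⟶ X), Mono m →
      ∃! χ : X ⟶ Ω, IsPullback m (terminal.from U) χ tr := hcls
  obtain ⟨P, ⟨adj⟩⟩ := (IsTopos.cartesianClosed (C := 𝒞) Z).exists_rightAdjoint
  haveI hδ : Mono (prod.lift (𝟙 Z) (𝟙 Z)) :=
    mono_of_mono_fac (h := 𝟙 Z) (by simp : prod.lift (𝟙 Z) (𝟙 Z) ≫ prod.fst = 𝟙 Z)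
  haveI hr : Mono (prod.lift k m) :=
    mono_of_mono_fac (h := m) (by simp : prod.lift k m ≫ prod.snd = m)
  obtain ⟨χδ, hχδ, -⟩ := hcls (prod.lift (𝟙 Z) (𝟙 Z)) hδ
  obtain ⟨χR, hχR, -⟩ := hcls (prod.lift k m) hr
  -- classification of graphs through χδ
  have claimA : ∀ {V : 𝒞} (a : V ⟶ Z),
      IsPullback (prod.lift a (𝟙 V)) (terminal.from V) (prod.map (𝟙 Z) a ≫ χδ) tr := by
    intro V a
    have := (aux_pb1 a).paste_vert hχδ
    rwa [terminal.comp_from] at this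
  have claimR : IsPullback (prod.lift k (𝟙 Y)) (terminal.from Y) (prod.map (𝟙 Z) m ≫ χR) tr := by
    have := (aux_pb2 k m).paste_vert hχR
    rwa [terminal.comp_from] at this
  have hg1 : ∀ {V : 𝒞} (a : V ⟶ Z), Mono (prod.lift a (𝟙 V)) := fun {V} a =>
    mono_of_mono_fac (h := 𝟙 V) (by simp : prod.lift a (𝟙 V) ≫ prod.snd = 𝟙 V)
  have e : prod.map (𝟙 Z) k ≫ χδ = prod.map (𝟙 Z) m ≫ χR := by
    obtain ⟨χ₁, -, hu⟩ := hcls (prod.lift k (𝟙 Y)) (hg1 k)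
    exact (hu _ (claimA k)).trans (hu _ claimR).symm
  refine ⟨P.obj Ω,
    (adj.homEquiv Z Ω) (show (prod.functor.obj Z).obj Z ⟶ Ω from χδ),
    (adj.homEquiv T Ω) (show (prod.functor.obj Z).obj T ⟶ Ω from χR), ?_, ?_⟩
  · refine ⟨fun {V} a b hab => ?_⟩
    have hae : (adj.homEquiv V Ω) ((prod.functor.obj Z).map a ≫ χδ) =
        (adj.homEquiv V Ω) ((prod.functor.obj Z).map b ≫ χδ) := by
      exact (Adjunction.homEquiv_naturality_left adj _ _).trans
        (hab.trans (Adjunction.homEquiv_naturality_left adj _ _).symm)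
    have he := (adj.homEquiv V Ω).injective hae
    have he' : prod.map (𝟙 Z) a ≫ χδ = prod.map (𝟙 Z) b ≫ χδ := by
      exact he
    have pa := claimA a
    have pb := claimA b
    rw [he'] at pa
    have hj : (pa.isoIsPullback _ _ pb).hom ≫ prod.lift b (𝟙 V) = prod.lift a (𝟙 V) :=
      pa.isoIsPullback_hom_fst _ _ pb
    have hj1 : (pa.isoIsPullback _ _ pb).hom = 𝟙 V := by
      have := congrArg (· ≫ (prod.snd : Z ⨯ V ⟶ V)) hj
      simpa using this
    have := congrArg (· ≫ (prod.fst : Z ⨯ V ⟶ Z)) hj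
    simp only [Category.assoc, prod.lift_fst, hj1, Category.id_comp] at this
    exact this.symm
  · refine (Adjunction.homEquiv_naturality_left adj _ _).symm.trans
      (Eq.trans ?_ (Adjunction.homEquiv_naturality_left adj _ _))
    refine congrArg (adj.homEquiv Y Ω) ?_
    exact e

end Aux
section Aux2

variable {𝒞 : Type u} [Category.{v} 𝒞] [IsTopos 𝒞] [HasFiniteColimits 𝒞]

lemma mono_pushout_map_right {Y Z T' T : 𝒞} (f : Y ⟶ Z) (g : Y ⟶ T') (m : T' ⟶ T) [Mono m] :
    Mono (pushout.map f g f (g ≫ m) (𝟙 Z) m (𝟙 Y) (by simp) (by simp)) := by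
  obtain ⟨W, η, φ, hη, hcomm⟩ := pmc m (pushout.inr f g)
  have hd : f ≫ (pushout.inl f g ≫ η) = (g ≫ m) ≫ φ := by
    rw [← Category.assoc, pushout.condition, Category.assoc, hcomm, Category.assoc]
  haveI := hη
  have key : pushout.map f g f (g ≫ m) (𝟙 Z) m (𝟙 Y) (by simp) (by simp) ≫
      pushout.desc (pushout.inl f g ≫ η) φ hd = η := by
    ext
    · simp
    · simp [hcomm]
  exact mono_of_mono_fac key

lemma mono_pushout_map_left {Y Z T Z₂ : 𝒞} (f : Y ⟶ Z) (g : Y ⟶ T) (n : Z ⟶ Z₂) [Mono n] :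
    Mono (pushout.map f g (f ≫ n) g n (𝟙 T) (𝟙 Y) (by simp) (by simp)) := by
  obtain ⟨W, η, φ, hη, hcomm⟩ := pmc n (pushout.inl f g)
  have hd : (f ≫ n) ≫ φ = g ≫ (pushout.inr f g ≫ η) := by
    rw [Category.assoc, ← hcomm, ← Category.assoc, pushout.condition, Category.assoc]
  haveI := hη
  have key : pushout.map f g (f ≫ n) g n (𝟙 T) (𝟙 Y) (by simp) (by simp) ≫
      pushout.desc φ (pushout.inr f g ≫ η) hd = η := by
    ext
    · simp [hcomm]
    · simp
  exact mono_of_mono_fac key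

lemma mono_pushout_map {Y Z T' Z₂ T : 𝒞} (f : Y ⟶ Z) (g : Y ⟶ T')
    (f' : Y ⟶ Z₂) (g' : Y ⟶ T) (n : Z ⟶ Z₂) (m : T' ⟶ T) [Mono n] [Mono m]
    (e₁ : f ≫ n = 𝟙 Y ≫ f') (e₂ : g ≫ m = 𝟙 Y ≫ g') :
    Mono (pushout.map f g f' g' n m (𝟙 Y) e₁ e₂) := by
  obtain rfl : f' = f ≫ n := by simpa using e₁.symm
  obtain rfl : g' = g ≫ m := by simpa using e₂.symm
  have split : pushout.map f g (f ≫ n) (g ≫ m) n m (𝟙 Y) e₁ e₂ =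
      pushout.map f g f (g ≫ m) (𝟙 Z) m (𝟙 Y) (by simp) (by simp) ≫
      pushout.map f (g ≫ m) (f ≫ n) (g ≫ m) n (𝟙 T) (𝟙 Y) (by simp) (by simp) := by
    ext <;> simp
  rw [split]
  haveI := mono_pushout_map_right f g m
  haveI := mono_pushout_map_left f (g ≫ m) n
  exact mono_comp _ _

end Aux2

/-- In a topos, with monomorphisms `s' : S' ↣ S`, `s'' : S'' ↣ S`,
`t' : T' ↣ T`, `t'' : T'' ↣ T` and compatible morphisms from `Y`, the canonical morphism
`θ_Y : (S' ×_S S'') +_Y (T' ×_T T'') ⟶ (S' +_Y T') ×_{S +_Y T} (S'' +_Y T'')`,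
induced by the universal properties of the pushout `A_Y` and the pullback `B_Y`,
is a monomorphism. -/
theorem stmt7 {𝒞 : Type u} [Category.{v} 𝒞] [IsTopos 𝒞] [HasFiniteColimits 𝒞]
    {Y S S' S'' T T' T'' : 𝒞}
    (s' : S' ⟶ S) (s'' : S'' ⟶ S) (t' : T' ⟶ T) (t'' : T'' ⟶ T)
    [Mono s'] [Mono s''] [Mono t'] [Mono t'']
    (yS' : Y ⟶ S') (yS'' : Y ⟶ S'') (yT' : Y ⟶ T') (yT'' : Y ⟶ T'')
    (hS : yS' ≫ s' = yS'' ≫ s'') (hT : yT' ≫ t' = yT'' ≫ t'') :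
    Mono (
    pushout.desc
      (f := pullback.lift yS' yS'' hS) (g := pullback.lift yT' yT'' hT)
      -- the map `S' ×_S S'' ⟶ B_Y` induced by the universal property of the pullback `B_Y`
      (pullback.lift
        (f := pushout.map yS' yT' (yS' ≫ s') (yT' ≫ t') s' t' (𝟙 Y)
          (Category.id_comp _).symm (Category.id_comp _).symm)
        (g := pushout.map yS'' yT'' (yS' ≫ s') (yT' ≫ t') s'' t'' (𝟙 Y)
          (by rw [Category.id_comp]; exact hS.symm) (by rw [Category.id_comp]; exact hT.symm))
        (pullback.fst s' s'' ≫ pushout.inl yS' yT')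
        (pullback.snd s' s'' ≫ pushout.inl yS'' yT'')
        (by simp only [Category.assoc]; erw [pushout.inl_desc, pushout.inl_desc]; exact pullback.condition_assoc _))
      -- the map `T' ×_T T'' ⟶ B_Y` induced by the universal property of the pullback `B_Y`
      (pullback.lift
        (f := pushout.map yS' yT' (yS' ≫ s') (yT' ≫ t') s' t' (𝟙 Y)
          (Category.id_comp _).symm (Category.id_comp _).symm)
        (g := pushout.map yS'' yT'' (yS' ≫ s') (yT' ≫ t') s'' t'' (𝟙 Y)
          (by rw [Category.id_comp]; exact hS.symm) (by rw [Category.id_comp]; exact hT.symm))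
        (pullback.fst t' t'' ≫ pushout.inr yS' yT')
        (pullback.snd t' t'' ≫ pushout.inr yS'' yT'')
        (by simp only [Category.assoc]; erw [pushout.inr_desc, pushout.inr_desc]; exact pullback.condition_assoc _))
      -- compatibility, giving the map out of the pushout `A_Y`
      (by apply pullback.hom_ext <;> simp only [Category.assoc] <;> first | (erw [pullback.lift_fst, pullback.lift_fst, pullback.lift_fst_assoc, pullback.lift_fst_assoc]; exact pushout.condition) | (erw [pullback.lift_snd, pullback.lift_snd, pullback.lift_snd_assoc, pullback.lift_snd_assoc]; exact pushout.condition))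
    ) := by 
  have pe1 : pullback.lift yS' yS'' hS ≫ (pullback.fst s' s'' ≫ s') = 𝟙 Y ≫ (yS' ≫ s') := by
    simp
  have pe2 : pullback.lift yT' yT'' hT ≫ (pullback.fst t' t'' ≫ t') = 𝟙 Y ≫ (yT' ≫ t') := by
    simp
  haveI hn : Mono (pullback.fst s' s'' ≫ s') := mono_comp _ _
  haveI hm : Mono (pullback.fst t' t'' ≫ t') := mono_comp _ _
  haveI hψ : Mono (pushout.map (pullback.lift yS' yS'' hS) (pullback.lift yT' yT'' hT)
      (yS' ≫ s') (yT' ≫ t')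
      (pullback.fst s' s'' ≫ s') (pullback.fst t' t'' ≫ t') (𝟙 Y) pe1 pe2) :=
    mono_pushout_map _ _ _ _ _ _ pe1 pe2
  exact mono_of_mono_fac (f := pullback.fst _ _ ≫
      pushout.map yS' yT' (yS' ≫ s') (yT' ≫ t') s' t' (𝟙 Y)
        (Category.id_comp _).symm (Category.id_comp _).symm)
    (h := pushout.map (pullback.lift yS' yS'' hS) (pullback.lift yT' yT'' hT)
      (yS' ≫ s') (yT' ≫ t')
      (pullback.fst s' s'' ≫ s') (pullback.fst t' t'' ≫ t') (𝟙 Y) pe1 pe2)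
    (by ext <;> simp)
end

section
/- Let C be a topos and let X, Y, Z be objects. Let L, S, L' be cospans from X to Y and let R, T, R' be cospans from Y to Z. Let S' be a span of cospans from L to S, S'' a span of cospans from S to L', T' a span of cospans from R to T, and T'' a span of cospans from T to R', all of whose span legs are monomorphisms. Form the vertical composites S' ×_S S'' and T' ×_T T'' (pullbacks over the monic legs into S and T), and the horizontal composites via pushout over Y. Then the canonical morphism θ_Y : (S' ×_S S'') +_Y (T' ×_T T'') → (S' +_Y T') ×_{S +_Y T} (S'' +_Y T'') is an isomorphism of spans of cospans from the cospan L +_Y R to the cospan L' +_Y R': θ_Y is an isomorphism in C, and composing θ_Y with the canonical leg (S' +_Y T') ×_{S +_Y T} (S'' +_Y T'') → L +_Y R (projection followed by the induced map S' +_Y T' → L +_Y R) equals the canonical leg (S' ×_S S'') +_Y (T' ×_T T'') → L +_Y R, and similarly for the legs to L' +_Y R'. -/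
open CategoryTheory CategoryTheory.Limits

universe v u

attribute [local simp] prod.lift_fst prod.lift_snd prod.lift_fst_assoc prod.lift_snd_assoc pullback.lift_fst pullback.lift_snd pullback.lift_fst_assoc pullback.lift_snd_assoc pushout.inl_desc pushout.inr_desc pushout.inl_desc_assoc pushout.inr_desc_assoc

namespace Stmt10Aux

variable {C : Type u} [Category.{v} C]

/-- Build an `IsPullback` from commutativity, existence and uniqueness of lifts. -/
theorem isPullback_of_exists_unique {P X Y Z : C} {fst : P ⟶ X} {snd : P ⟶ Y}
    {f : X ⟶ Z} {g : Y ⟶ Z} (w : fst ≫ f = snd ≫ g)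
    (ex : ∀ {W : C} (u : W ⟶ X) (v : W ⟶ Y), u ≫ f = v ≫ g →
      ∃ l : W ⟶ P, l ≫ fst = u ∧ l ≫ snd = v)
    (uniq : ∀ {W : C} (l l' : W ⟶ P), l ≫ fst = l' ≫ fst → l ≫ snd = l' ≫ snd → l = l') :
    IsPullback fst snd f g := by
  refine IsPullback.of_isLimit (PullbackCone.IsLimit.mk w
    (fun s => (ex s.fst s.snd s.condition).choose)
    (fun s => (ex s.fst s.snd s.condition).choose_spec.1)
    (fun s => (ex s.fst s.snd s.condition).choose_spec.2)
    (fun s m h1 h2 => uniq m _ ?_ ?_))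
  · rw [h1, (ex s.fst s.snd s.condition).choose_spec.1]
  · rw [h2, (ex s.fst s.snd s.condition).choose_spec.2]

/-- Pulling back a monomorphism `b` along a map that factors through it. -/
theorem isPullback_id_of_mono {A B D : C} (u : A ⟶ B) (b : B ⟶ D) [Mono b] :
    IsPullback u (𝟙 A) b (u ≫ b) := by
  apply isPullback_of_exists_unique (by simp)
    (fun {W} x y h => ⟨y, by rw [← cancel_mono b, Category.assoc, h], by simp⟩)
    (fun l l' _ h2 => by simpa using h2)

section Classifier

variable [HasTerminal C] [_root_.HasSubobjectClassifier C]

/-- A chosen subobject classifier object. -/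
noncomputable def Omg (C : Type u) [Category.{v} C] [HasTerminal C]
    [_root_.HasSubobjectClassifier C] : C :=
  (_root_.HasSubobjectClassifier.exists_classifier (C := C)).choose

/-- The chosen truth morphism. -/
noncomputable def tru (C : Type u) [Category.{v} C] [HasTerminal C]
    [_root_.HasSubobjectClassifier C] : ⊤_ C ⟶ Omg C :=
  (_root_.HasSubobjectClassifier.exists_classifier (C := C)).choose_spec.choose

theorem classify {U X : C} (m : U ⟶ X) (hm : Mono m) :
    ∃! χ : X ⟶ Omg C, IsPullback m (terminal.from U) χ (tru C) :=
  (_root_.HasSubobjectClassifier.exists_classifier (C := C)).choose_spec.choose_spec m hm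

/-- The chosen classifying map of a monomorphism. -/
noncomputable def cls {U X : C} (m : U ⟶ X) [Mono m] : X ⟶ Omg C :=
  (classify m ‹_›).choose

theorem cls_isPullback {U X : C} (m : U ⟶ X) [Mono m] :
    IsPullback m (terminal.from U) (cls m) (tru C) :=
  (classify m ‹_›).choose_spec.1

theorem cls_uniq {U X : C} (m : U ⟶ X) [Mono m] (c : X ⟶ Omg C)
    (h : IsPullback m (terminal.from U) c (tru C)) : c = cls m :=
  (classify m ‹_›).choose_spec.2 c h

/-- Classifying maps compose with pullbacks. -/
theorem cls_comp {U X W : C} (m : U ⟶ X) [Mono m] (g : W ⟶ X) [HasPullback m g] :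
    g ≫ cls m = cls (pullback.snd m g) := by
  apply cls_uniq
  have h1 : IsPullback (pullback.snd m g) (pullback.fst m g) g m :=
    (IsPullback.of_hasPullback m g).flip
  have h2 := h1.paste_vert (cls_isPullback m)
  have : pullback.fst m g ≫ terminal.from U = terminal.from (pullback m g) :=
    terminal.hom_ext _ _
  rwa [this] at h2

/-- If two monos have the same classifying map, each factors through the other. -/
theorem factor_of_cls_eq {U V X : C} (m : U ⟶ X) (n : V ⟶ X) [Mono m] [Mono n]
    (h : cls m = cls n) : ∃ φ : U ⟶ V, φ ≫ n = m := by
  have hn : IsPullback n (terminal.from V) (cls m) (tru C) := h ▸ cls_isPullback n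
  exact ⟨hn.lift m (terminal.from U) (cls_isPullback m).w, hn.lift_fst _ _ _⟩

/-- Mutually factoring monos have equal classifying maps. -/
theorem cls_eq_of_factor {U V X : C} (m : U ⟶ X) (n : V ⟶ X) [Mono m] [Mono n]
    (φ : U ⟶ V) (hφ : φ ≫ n = m) (ψ : V ⟶ U) (hψ : ψ ≫ m = n) : cls m = cls n := by
  symm; apply cls_uniq
  apply isPullback_of_exists_unique
  · rw [← hφ, Category.assoc, (cls_isPullback n).w, ← Category.assoc]
    congr 1; exact terminal.hom_ext _ _
  · intro W u v huv
    refine ⟨(cls_isPullback n).lift u v huv ≫ ψ, ?_, terminal.hom_ext _ _⟩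
    rw [Category.assoc, hψ, (cls_isPullback n).lift_fst u v huv]
  · intro W l l' h1 _
    rwa [cancel_mono m] at h1

end Classifier

section Graph

variable [IsTopos C]

instance (priority := 50) instSC : _root_.HasSubobjectClassifier C :=
  IsTopos.hasSubobjectClassifier

instance prodLift_mono {D W K : C} (f : D ⟶ K) (d : D ⟶ W) [Mono d] :
    Mono (prod.lift f d) := by
  constructor
  intro Z u v h
  have h2 : u ≫ d = v ≫ d := by simpa using h =≫ prod.snd
  exact (cancel_mono d).1 h2

instance diag_mono (K : C) : Mono (diag K) := by
  rw [diag]; infer_instance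

/-- The chosen exponential adjunction for the functor `K ⨯ -`. -/
noncomputable def expAdj (K : C) :
    haveI := IsTopos.cartesianClosed (C := C) K
    prod.functor.obj K ⊣ (prod.functor.obj K).rightAdjoint :=
  haveI := IsTopos.cartesianClosed (C := C) K
  Adjunction.ofIsLeftAdjoint _

/-- The power-like object `Ω^K`. -/
noncomputable def pOb (K : C) : C :=
  haveI := IsTopos.cartesianClosed (C := C) K
  (prod.functor.obj K).rightAdjoint.obj (Omg C)

/-- Currying with values in `Ω`. -/
noncomputable def cur {K W : C} (f : K ⨯ W ⟶ Omg C) : W ⟶ pOb K :=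
  (expAdj K).homEquiv W (Omg C) f

theorem cur_inj {K W : C} {f g : K ⨯ W ⟶ Omg C} (h : cur f = cur g) : f = g :=
  ((expAdj K).homEquiv W (Omg C)).injective h

theorem cur_natural {K W W' : C} (h : W' ⟶ W) (f : K ⨯ W ⟶ Omg C) :
    h ≫ cur f = cur (prod.map (𝟙 K) h ≫ f) :=
  ((expAdj K).homEquiv_naturality_left h f).symm

/-- The singleton map `K ⟶ Ω^K`. -/
noncomputable def sing (K : C) : K ⟶ pOb K := cur (cls (diag K))

theorem isPullback_graph_diag {V K : C} (β : V ⟶ K) :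
    IsPullback (prod.lift β (𝟙 V)) β (prod.map (𝟙 K) β) (diag K) := by
  apply isPullback_of_exists_unique
  · apply Limits.prod.hom_ext <;> simp [diag]
  · intro W u v huv
    have h1 : u ≫ prod.fst = v := by
      have := huv =≫ prod.fst; simpa [diag] using this
    have h2 : (u ≫ prod.snd) ≫ β = v := by
      have := huv =≫ prod.snd; simpa [diag] using this
    refine ⟨u ≫ prod.snd, ?_, h2⟩
    apply Limits.prod.hom_ext <;> simp [h1, h2]
  · intro W l l' h1 _
    have e1 := h1 =≫ prod.snd
    simpa using e1

theorem isPullback_graph_mono {D W K : C} (f : D ⟶ K) (d : D ⟶ W) [Mono d] :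
    IsPullback (prod.lift f (𝟙 D)) (𝟙 D) (prod.map (𝟙 K) d) (prod.lift f d) := by
  apply isPullback_of_exists_unique
  · apply Limits.prod.hom_ext <;> simp
  · intro W' u v huv
    have h1 : u ≫ prod.fst = v ≫ f := by
      have := huv =≫ prod.fst; simpa using this
    have h2 : u ≫ prod.snd = v := by
      have := huv =≫ prod.snd; rw [← cancel_mono d]; simpa using this
    refine ⟨v, ?_, by simp⟩
    apply Limits.prod.hom_ext
    · rw [Category.assoc, prod.lift_fst, h1]
    · rw [Category.assoc, prod.lift_snd, Category.comp_id, h2]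
  · intro W' l l' _ h2
    simpa using h2

theorem comp_sing {V K : C} (β : V ⟶ K) :
    β ≫ sing K = cur (cls (prod.lift β (𝟙 V))) := by
  rw [sing, cur_natural]
  congr 1
  apply cls_uniq
  have h := (isPullback_graph_diag β).paste_vert (cls_isPullback (diag K))
  rwa [show β ≫ terminal.from K = terminal.from V from terminal.hom_ext _ _] at h

instance sing_mono (K : C) : Mono (sing K) := by
  constructor
  intro V α β h
  rw [comp_sing, comp_sing] at h
  obtain ⟨φ, hφ⟩ := factor_of_cls_eq _ _ (cur_inj h)
  have h2 : φ ≫ 𝟙 V = 𝟙 V := by simpa using hφ =≫ prod.snd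
  have h1 : φ ≫ β = α := by simpa using hφ =≫ prod.fst
  rw [← h1]
  simp only [Category.comp_id] at h2
  rw [h2, Category.id_comp]

/-- The classifying map of a partial map `(d, f)`. -/
noncomputable def gcl {D W K : C} (f : D ⟶ K) (d : D ⟶ W) [Mono d] : W ⟶ pOb K :=
  cur (cls (prod.lift f d))

theorem graph_isPullback {D W K : C} (f : D ⟶ K) (d : D ⟶ W) [Mono d] :
    IsPullback d f (gcl f d) (sing K) := by
  have hcomm : d ≫ gcl f d = f ≫ sing K := by
    rw [gcl, cur_natural, comp_sing]
    congr 1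
    apply cls_uniq
    have h := (isPullback_graph_mono f d).paste_vert (cls_isPullback (prod.lift f d))
    rwa [show 𝟙 D ≫ terminal.from D = terminal.from D from terminal.hom_ext _ _] at h
  apply isPullback_of_exists_unique hcomm
  · intro V α β h
    rw [gcl, cur_natural, cls_comp, comp_sing] at h
    obtain ⟨φ, hφ⟩ := factor_of_cls_eq _ _ (cur_inj h).symm
    set w := φ ≫ pullback.fst (prod.lift f d) (prod.map (𝟙 K) α) with hw
    have hco : w ≫ prod.lift f d = prod.lift β α := by
      rw [hw, Category.assoc, pullback.condition, ← Category.assoc, hφ]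
      apply Limits.prod.hom_ext <;> simp
    refine ⟨w, ?_, ?_⟩
    · simpa using hco =≫ prod.snd
    · simpa using hco =≫ prod.fst
  · intro V l l' h1 _
    rwa [cancel_mono d] at h1

theorem isPushout_mono {G H K W : C} {n : G ⟶ H} {k : G ⟶ K}
    {iH : H ⟶ W} {iK : K ⟶ W} [Mono n] (hp : IsPushout n k iH iK) :
    Mono iK ∧ IsPullback n k iH iK := by
  have hg := graph_isPullback k n
  have hd : n ≫ gcl k n = k ≫ sing K := hg.w
  have hinl : iH ≫ hp.desc (gcl k n) (sing K) hd = gcl k n := hp.inl_desc _ _ _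
  have hinr : iK ≫ hp.desc (gcl k n) (sing K) hd = sing K := hp.inr_desc _ _ _
  constructor
  · constructor
    intro Z u v huv
    have h2 : u ≫ sing K = v ≫ sing K := by
      rw [← hinr]
      simp only [← Category.assoc, huv]
    exact (cancel_mono (sing K)).1 h2
  · apply isPullback_of_exists_unique hp.w
    · intro V α β h
      have h2 : α ≫ gcl k n = β ≫ sing K := by
        calc α ≫ gcl k n = (α ≫ iH) ≫ hp.desc (gcl k n) (sing K) hd := by
              rw [Category.assoc, hinl]
          _ = (β ≫ iK) ≫ hp.desc (gcl k n) (sing K) hd := by rw [h]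
          _ = β ≫ sing K := by rw [Category.assoc, hinr]

      exact ⟨hg.lift α β h2, hg.lift_fst _ _ _, hg.lift_snd _ _ _⟩
    · intro V l l' h1 _
      rwa [cancel_mono n] at h1

end Graph

section Compare

variable [IsTopos C] [HasFiniteColimits C]

theorem onestepL {Y U1 U2 V : C} (f1 : Y ⟶ U1) (f2 : Y ⟶ U2) (g : Y ⟶ V)
    (mU : U1 ⟶ U2) [Mono mU] (hf : f1 ≫ mU = f2)
    (c : pushout f1 g ⟶ pushout f2 g)
    (hc1 : pushout.inl f1 g ≫ c = mU ≫ pushout.inl f2 g)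
    (hc2 : pushout.inr f1 g ≫ c = pushout.inr f2 g) :
    Mono c ∧ IsPullback mU (pushout.inl f1 g) (pushout.inl f2 g) c := by
  have t : IsPushout f1 g (pushout.inl f1 g) (pushout.inr f1 g) :=
    IsPushout.of_hasPushout f1 g
  have s : IsPushout (f1 ≫ mU) g (pushout.inl f2 g) (pushout.inr f1 g ≫ c) := by
    rw [hf, hc2]; exact IsPushout.of_hasPushout f2 g
  have B : IsPushout mU (pushout.inl f1 g) (pushout.inl f2 g) c :=
    IsPushout.of_left s hc1.symm t
  exact isPushout_mono B

theorem onestepR {Y U V1 V2 : C} (f : Y ⟶ U) (g1 : Y ⟶ V1) (g2 : Y ⟶ V2)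
    (mV : V1 ⟶ V2) [Mono mV] (hg : g1 ≫ mV = g2)
    (c : pushout f g1 ⟶ pushout f g2)
    (hc1 : pushout.inl f g1 ≫ c = pushout.inl f g2)
    (hc2 : pushout.inr f g1 ≫ c = mV ≫ pushout.inr f g2) :
    Mono c ∧ IsPullback mV (pushout.inr f g1) (pushout.inr f g2) c := by
  have t : IsPushout g1 f (pushout.inr f g1) (pushout.inl f g1) :=
    (IsPushout.of_hasPushout f g1).flip
  have s : IsPushout (g1 ≫ mV) f (pushout.inr f g2) (pushout.inl f g1 ≫ c) := by
    rw [hg, hc1]; exact (IsPushout.of_hasPushout f g2).flip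
  have B : IsPushout mV (pushout.inr f g1) (pushout.inr f g2) c :=
    IsPushout.of_left s hc2.symm t
  exact isPushout_mono B

theorem comp_pushout_map {Y U1 U2 V1 V2 : C} (f1 : Y ⟶ U1) (g1 : Y ⟶ V1)
    (f2 : Y ⟶ U2) (g2 : Y ⟶ V2) (mU : U1 ⟶ U2) (mV : V1 ⟶ V2) [Mono mU] [Mono mV]
    (hf : f1 ≫ mU = f2) (hg : g1 ≫ mV = g2)
    (c : pushout f1 g1 ⟶ pushout f2 g2)
    (hc1 : pushout.inl f1 g1 ≫ c = mU ≫ pushout.inl f2 g2)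
    (hc2 : pushout.inr f1 g1 ≫ c = mV ≫ pushout.inr f2 g2) :
    Mono c ∧ IsPullback (pushout.inl f1 g1) mU c (pushout.inl f2 g2) ∧
      IsPullback (pushout.inr f1 g1) mV c (pushout.inr f2 g2) := by
  let c1 : pushout f1 g1 ⟶ pushout f2 g1 :=
    pushout.map f1 g1 f2 g1 mU (𝟙 V1) (𝟙 Y) (by rw [hf]; simp) (by simp)
  let c2 : pushout f2 g1 ⟶ pushout f2 g2 :=
    pushout.map f2 g1 f2 g2 (𝟙 U2) mV (𝟙 Y) (by simp) (by rw [hg]; simp)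
  have hcc : c = c1 ≫ c2 := by
    apply pushout.hom_ext <;> simp [c1, c2, hc1, hc2]
  have O1 := onestepL f1 f2 g1 mU hf c1 (by simp [c1]) (by simp [c1])
  have O2 := onestepR f2 g1 g2 mV hg c2 (by simp [c2]) (by simp [c2])
  haveI := O1.1
  haveI := O2.1
  have PU2 : IsPullback (pushout.inl f2 g1) (𝟙 U2) c2 (pushout.inl f2 g2) := by
    have h := isPullback_id_of_mono (pushout.inl f2 g1) c2
    rwa [show pushout.inl f2 g1 ≫ c2 = pushout.inl f2 g2 by simp [c2]] at h
  have PV1 : IsPullback (pushout.inr f1 g1) (𝟙 V1) c1 (pushout.inr f2 g1) := by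
    have h := isPullback_id_of_mono (pushout.inr f1 g1) c1
    rwa [show pushout.inr f1 g1 ≫ c1 = pushout.inr f2 g1 by simp [c1]] at h
  refine ⟨hcc ▸ mono_comp c1 c2, ?_, ?_⟩
  · have h := (O1.2.flip).paste_vert PU2
    rwa [Category.comp_id, ← hcc] at h
  · have h := PV1.paste_vert O2.2.flip
    rwa [Category.id_comp, ← hcc] at h

/-- The key subobject comparison on one component of the pushout `M`. -/
theorem cls_component {P Q M S S' S'' A : C}
    (p : P ⟶ M) (q : Q ⟶ M) (inS : S ⟶ M) (dS : S' ⟶ S) (uS : S'' ⟶ S)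
    (iP : S' ⟶ P) (iQ : S'' ⟶ Q) (ιA : A ⟶ M)
    [Mono p] [Mono q] [Mono ιA]
    (HP : IsPullback iP dS p inS) (HQ : IsPullback iQ uS q inS)
    (hE : ∀ {W : C} (a : W ⟶ S') (b : W ⟶ S''), a ≫ dS = b ≫ uS →
       ∃ t : W ⟶ A, t ≫ ιA = (a ≫ iP) ≫ p) :
    inS ≫ cls (pullback.snd ιA (pullback.fst p q ≫ p) ≫ pullback.fst p q ≫ p)
      = inS ≫ cls (pullback.fst p q ≫ p) := by
  rw [cls_comp (pullback.snd ιA (pullback.fst p q ≫ p) ≫ pullback.fst p q ≫ p) inS,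
    cls_comp (pullback.fst p q ≫ p) inS]
  -- `D = A ∩ B` and `B`, pulled back to `S`, are mutually factoring subobjects of `S`.
  have hφc : (pullback.fst (pullback.snd ιA (pullback.fst p q ≫ p) ≫ pullback.fst p q ≫ p) inS
        ≫ pullback.snd ιA (pullback.fst p q ≫ p)) ≫ (pullback.fst p q ≫ p)
      = pullback.snd (pullback.snd ιA (pullback.fst p q ≫ p) ≫ pullback.fst p q ≫ p) inS
        ≫ inS := by
    rw [Category.assoc]
    exact pullback.condition
  have hπP : (pullback.fst (pullback.fst p q ≫ p) inS ≫ pullback.fst p q) ≫ p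
      = pullback.snd (pullback.fst p q ≫ p) inS ≫ inS := by
    rw [Category.assoc]
    exact pullback.condition
  have hπQ : (pullback.fst (pullback.fst p q ≫ p) inS ≫ pullback.snd p q) ≫ q
      = pullback.snd (pullback.fst p q ≫ p) inS ≫ inS := by
    rw [Category.assoc, ← pullback.condition (f := p) (g := q), ← Category.assoc]
    exact hπP
  obtain ⟨t, ht⟩ := hE (HP.lift _ _ hπP) (HQ.lift _ _ hπQ)
    (by rw [HP.lift_snd, HQ.lift_snd])
  have hτ : t ≫ ιA = pullback.fst (pullback.fst p q ≫ p) inS ≫ (pullback.fst p q ≫ p) := by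
    rw [ht, HP.lift_fst, Category.assoc]
  have hdμ : pullback.lift t (pullback.fst (pullback.fst p q ≫ p) inS) hτ
        ≫ (pullback.snd ιA (pullback.fst p q ≫ p) ≫ pullback.fst p q ≫ p)
      = pullback.snd (pullback.fst p q ≫ p) inS ≫ inS := by
    rw [← Category.assoc, pullback.lift_snd]
    exact pullback.condition
  exact cls_eq_of_factor _ _
    (pullback.lift (pullback.fst _ inS ≫ pullback.snd ιA (pullback.fst p q ≫ p))
      (pullback.snd _ inS) hφc)
    (pullback.lift_snd _ _ _)
    (pullback.lift (pullback.lift t (pullback.fst (pullback.fst p q ≫ p) inS) hτ)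
      (pullback.snd (pullback.fst p q ≫ p) inS) hdμ)
    (pullback.lift_snd _ _ _)


/-- The main theorem: the canonical comparison from the pushout of pullbacks to the
pullback of pushouts is an isomorphism. -/
theorem main_isIso {Y S T S' T' S'' T'' : C}
    (yS' : Y ⟶ S') (yT' : Y ⟶ T') (yS'' : Y ⟶ S'') (yT'' : Y ⟶ T'')
    (yS : Y ⟶ S) (yT : Y ⟶ T)
    (dS' : S' ⟶ S) (dT' : T' ⟶ T) (uS'' : S'' ⟶ S) (uT'' : T'' ⟶ T)
    [Mono dS'] [Mono dT'] [Mono uS''] [Mono uT'']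
    (h1 : yS' ≫ dS' = yS) (h2 : yT' ≫ dT' = yT)
    (h3 : yS'' ≫ uS'' = yS) (h4 : yT'' ≫ uT'' = yT)
    (yE : Y ⟶ pullback dS' uS'') (yF : Y ⟶ pullback dT' uT'')
    (hyE1 : yE ≫ pullback.fst dS' uS'' = yS') (hyE2 : yE ≫ pullback.snd dS' uS'' = yS'')
    (hyF1 : yF ≫ pullback.fst dT' uT'' = yT') (hyF2 : yF ≫ pullback.snd dT' uT'' = yT'')
    (p : pushout yS' yT' ⟶ pushout yS yT)
    (hp1 : pushout.inl yS' yT' ≫ p = dS' ≫ pushout.inl yS yT)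
    (hp2 : pushout.inr yS' yT' ≫ p = dT' ≫ pushout.inr yS yT)
    (q : pushout yS'' yT'' ⟶ pushout yS yT)
    (hq1 : pushout.inl yS'' yT'' ≫ q = uS'' ≫ pushout.inl yS yT)
    (hq2 : pushout.inr yS'' yT'' ≫ q = uT'' ≫ pushout.inr yS yT)
    (r : pushout yE yF ⟶ pushout yS' yT')
    (hr1 : pushout.inl yE yF ≫ r = pullback.fst dS' uS'' ≫ pushout.inl yS' yT')
    (hr2 : pushout.inr yE yF ≫ r = pullback.fst dT' uT'' ≫ pushout.inr yS' yT')
    (θ : pushout yE yF ⟶ pullback p q)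
    (hθ1 : θ ≫ pullback.fst p q = r) :
    IsIso θ := by
  have Hp := comp_pushout_map yS' yT' yS yT dS' dT' h1 h2 p hp1 hp2
  have Hq := comp_pushout_map yS'' yT'' yS yT uS'' uT'' h3 h4 q hq1 hq2
  have Hr := comp_pushout_map yE yF yS' yT' (pullback.fst dS' uS'') (pullback.fst dT' uT'')
    hyE1 hyF1 r hr1 hr2
  haveI := Hp.1
  haveI := Hq.1
  haveI := Hr.1
  -- the two legs `A ⟶ M` and `B ⟶ M` are monomorphisms
  have hES : ∀ {W : C} (a : W ⟶ S') (b : W ⟶ S''), a ≫ dS' = b ≫ uS'' →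
      ∃ t : W ⟶ pushout yE yF, t ≫ (r ≫ p) = (a ≫ pushout.inl yS' yT') ≫ p := by
    intro W a b h
    refine ⟨pullback.lift a b h ≫ pushout.inl yE yF, ?_⟩
    have hh : (pullback.lift a b h ≫ pushout.inl yE yF) ≫ r = a ≫ pushout.inl yS' yT' := by
      rw [Category.assoc, hr1, ← Category.assoc, pullback.lift_fst]
    rw [← Category.assoc, hh]
  have hET : ∀ {W : C} (a : W ⟶ T') (b : W ⟶ T''), a ≫ dT' = b ≫ uT'' →
      ∃ t : W ⟶ pushout yE yF, t ≫ (r ≫ p) = (a ≫ pushout.inr yS' yT') ≫ p := by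
    intro W a b h
    refine ⟨pullback.lift a b h ≫ pushout.inr yE yF, ?_⟩
    have hh : (pullback.lift a b h ≫ pushout.inr yE yF) ≫ r = a ≫ pushout.inr yS' yT' := by
      rw [Category.assoc, hr2, ← Category.assoc, pullback.lift_fst]
    rw [← Category.assoc, hh]
  have hcls : cls (pullback.snd (r ≫ p) (pullback.fst p q ≫ p) ≫ pullback.fst p q ≫ p)
      = cls (pullback.fst p q ≫ p) := by
    apply pushout.hom_ext
    · exact cls_component p q (pushout.inl yS yT) dS' uS''
        (pushout.inl yS' yT') (pushout.inl yS'' yT'') (r ≫ p) Hp.2.1 Hq.2.1 hES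
    · exact cls_component p q (pushout.inr yS yT) dT' uT''
        (pushout.inr yS' yT') (pushout.inr yS'' yT'') (r ≫ p) Hp.2.2 Hq.2.2 hET
  obtain ⟨φ₀, hφ₀⟩ := factor_of_cls_eq (pullback.fst p q ≫ p)
    (pullback.snd (r ≫ p) (pullback.fst p q ≫ p) ≫ pullback.fst p q ≫ p) hcls.symm
  set ψ : pullback p q ⟶ pushout yE yF :=
    φ₀ ≫ pullback.fst (r ≫ p) (pullback.fst p q ≫ p) with hψdef
  have hψ : ψ ≫ (r ≫ p) = pullback.fst p q ≫ p := by
    rw [hψdef, Category.assoc,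
      pullback.condition (f := r ≫ p) (g := pullback.fst p q ≫ p)]
    exact hφ₀
  have hθrp : θ ≫ (pullback.fst p q ≫ p) = r ≫ p := by
    rw [← Category.assoc, hθ1]
  refine ⟨ψ, ?_, ?_⟩
  · rw [← cancel_mono (r ≫ p), Category.assoc, hψ, hθrp, Category.id_comp]
  · apply pullback.hom_ext
    · rw [← cancel_mono p, Category.id_comp, Category.assoc, Category.assoc, hθrp, hψ]
    · rw [← cancel_mono q, Category.id_comp, Category.assoc, Category.assoc,
        ← pullback.condition (f := p) (g := q), hθrp, hψ]


end Compare

end Stmt10Aux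

/-- In a topos, given cospans `L, S, L' : X → Y` and `R, T, R' : Y → Z`,
and spans of cospans `S' : L ⇒ S`, `S'' : S ⇒ L'`, `T' : R ⇒ T`, `T'' : T ⇒ R'` with monic
span legs, the canonical morphism
`θ_Y : (S' ×_S S'') +_Y (T' ×_T T'') ⟶ (S' +_Y T') ×_{S +_Y T} (S'' +_Y T'')`
is an isomorphism of spans of cospans from `L +_Y R` to `L' +_Y R'`: it is an isomorphism
in `𝒞` and it commutes with the canonical span legs to `L +_Y R` and to `L' +_Y R'`. -/
theorem stmt10 {𝒞 : Type u} [Category.{v} 𝒞] [IsTopos 𝒞] [HasFiniteColimits 𝒞]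
    {X Y Z L S L' R T R' S' S'' T' T'' : 𝒞}
    -- the cospans from `X` to `Y` and from `Y` to `Z`
    (xL : X ⟶ L) (yL : Y ⟶ L) (xS : X ⟶ S) (yS : Y ⟶ S) (xL' : X ⟶ L') (yL' : Y ⟶ L')
    (yR : Y ⟶ R) (zR : Z ⟶ R) (yT : Y ⟶ T) (zT : Z ⟶ T) (yR' : Y ⟶ R') (zR' : Z ⟶ R')
    -- the span of cospans `S'` from `L` to `S`, with monic span legs
    (xS' : X ⟶ S') (yS' : Y ⟶ S') (lS' : S' ⟶ L) (dS' : S' ⟶ S) [Mono lS'] [Mono dS']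
    (hS'1 : xS' ≫ lS' = xL) (hS'2 : yS' ≫ lS' = yL)
    (hS'3 : xS' ≫ dS' = xS) (hS'4 : yS' ≫ dS' = yS)
    -- the span of cospans `S''` from `S` to `L'`, with monic span legs
    (xS'' : X ⟶ S'') (yS'' : Y ⟶ S'') (uS'' : S'' ⟶ S) (dS'' : S'' ⟶ L')
    [Mono uS''] [Mono dS'']
    (hS''1 : xS'' ≫ uS'' = xS) (hS''2 : yS'' ≫ uS'' = yS)
    (hS''3 : xS'' ≫ dS'' = xL') (hS''4 : yS'' ≫ dS'' = yL')
    -- the span of cospans `T'` from `R` to `T`, with monic span legs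
    (yT' : Y ⟶ T') (zT' : Z ⟶ T') (lT' : T' ⟶ R) (dT' : T' ⟶ T) [Mono lT'] [Mono dT']
    (hT'1 : yT' ≫ lT' = yR) (hT'2 : zT' ≫ lT' = zR)
    (hT'3 : yT' ≫ dT' = yT) (hT'4 : zT' ≫ dT' = zT)
    -- the span of cospans `T''` from `T` to `R'`, with monic span legs
    (yT'' : Y ⟶ T'') (zT'' : Z ⟶ T'') (uT'' : T'' ⟶ T) (dT'' : T'' ⟶ R')
    [Mono uT''] [Mono dT'']
    (hT''1 : yT'' ≫ uT'' = yT) (hT''2 : zT'' ≫ uT'' = zT)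
    (hT''3 : yT'' ≫ dT'' = yR') (hT''4 : zT'' ≫ dT'' = zR')
    -- `θ_Y : A_Y ⟶ B_Y` is the canonical morphism from
    -- `A_Y = (S' ×_S S'') +_Y (T' ×_T T'')` to `B_Y = (S' +_Y T') ×_{S +_Y T} (S'' +_Y T'')`
    (θY : pushout (pullback.lift yS' yS'' (hS'4.trans hS''2.symm))
                  (pullback.lift yT' yT'' (hT'3.trans hT''1.symm)) ⟶
          pullback
            (pushout.map yS' yT' yS yT dS' dT' (𝟙 Y)
              (by rw [hS'4, Category.id_comp]) (by rw [hT'3, Category.id_comp]))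
            (pushout.map yS'' yT'' yS yT uS'' uT'' (𝟙 Y)
              (by rw [hS''2, Category.id_comp]) (by rw [hT''1, Category.id_comp])))
    (hθY : θY = pushout.desc
      (pullback.lift
        (pullback.fst dS' uS'' ≫ pushout.inl yS' yT')
        (pullback.snd dS' uS'' ≫ pushout.inl yS'' yT'')
        (by simp only [pushout.map, Category.assoc]; rw [pushout.inl_desc, pushout.inl_desc]; exact pullback.condition_assoc _))
      (pullback.lift
        (pullback.fst dT' uT'' ≫ pushout.inr yS' yT')
        (pullback.snd dT' uT'' ≫ pushout.inr yS'' yT'')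
        (by simp only [pushout.map, Category.assoc]; rw [pushout.inr_desc, pushout.inr_desc]; exact pullback.condition_assoc _))
      (by apply pullback.hom_ext <;> simp only [Category.assoc] <;> first | (rw [pullback.lift_fst, pullback.lift_fst, pullback.lift_fst_assoc, pullback.lift_fst_assoc]; exact pushout.condition) | (rw [pullback.lift_snd, pullback.lift_snd, pullback.lift_snd_assoc, pullback.lift_snd_assoc]; exact pushout.condition))) :
    -- `θ_Y` is an isomorphism in `𝒞`, and it commutes with the span legs to `L +_Y R`
    -- and to `L' +_Y R'`
    IsIso θY ∧
    θY ≫ (pullback.fst _ _ ≫ pushout.map yS' yT' yL yR lS' lT' (𝟙 Y)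
        (by rw [hS'2, Category.id_comp]) (by rw [hT'1, Category.id_comp])) =
      pushout.map _ _ yL yR (pullback.fst dS' uS'' ≫ lS') (pullback.fst dT' uT'' ≫ lT') (𝟙 Y)
        (by rw [pullback.lift_fst_assoc, hS'2, Category.id_comp])
        (by rw [pullback.lift_fst_assoc, hT'1, Category.id_comp]) ∧
    θY ≫ (pullback.snd _ _ ≫ pushout.map yS'' yT'' yL' yR' dS'' dT'' (𝟙 Y)
        (by rw [hS''4, Category.id_comp]) (by rw [hT''3, Category.id_comp])) =
      pushout.map _ _ yL' yR' (pullback.snd dS' uS'' ≫ dS'') (pullback.snd dT' uT'' ≫ dT'') (𝟙 Y)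
        (by rw [pullback.lift_snd_assoc, hS''4, Category.id_comp])
        (by rw [pullback.lift_snd_assoc, hT''3, Category.id_comp]) := by
  haveI : _root_.HasSubobjectClassifier 𝒞 := IsTopos.hasSubobjectClassifier
  subst hθY
  refine ⟨?_, by apply pushout.hom_ext <;> simp, by apply pushout.hom_ext <;> simp⟩
  exact Stmt10Aux.main_isIso yS' yT' yS'' yT'' yS yT dS' dT' uS'' uT''
    hS'4 hT'3 hS''2 hT''1
    (pullback.lift yS' yS'' (hS'4.trans hS''2.symm))
    (pullback.lift yT' yT'' (hT'3.trans hT''1.symm))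
    (by simp) (by simp) (by simp) (by simp)
    _ (by simp) (by simp)
    _ (by simp) (by simp)
    (pushout.map (pullback.lift yS' yS'' (hS'4.trans hS''2.symm))
      (pullback.lift yT' yT'' (hT'3.trans hT''1.symm)) yS' yT'
      (pullback.fst dS' uS'') (pullback.fst dT' uT'') (𝟙 Y) (by simp) (by simp))
    (by simp) (by simp)
    _ (by apply pushout.hom_ext <;> simp)
end

section
/- In the category Set, let S', S'', T' be two-element sets and let S, Y, T, T'' be singleton sets. Then for every choice of functions s' : S' → S, s'' : S'' → S, t' : T' → T, t'' : T'' → T and y_{S'} : Y → S', y_{S''} : Y → S'', y_{T'} : Y → T', y_{T''} : Y → T'' (these are compatible since S and T are singletons), the set (S' ×_S S'') +_Y (T' ×_T T'') has exactly 5 elements while the set (S' +_Y T') ×_{S +_Y T} (S'' +_Y T'') has exactly 6 elements; in particular these two sets are not isomorphic, so the interchange isomorphism fails in Set when the span legs are not required to be monomorphisms. -/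
open CategoryTheory CategoryTheory.Limits

noncomputable section

namespace Stmt12Aux

variable {Y B C : Type} [Unique Y] (f : Y ⟶ B) (g : Y ⟶ C)

open Classical in
/-- Explicit pushout cocone along a singleton. -/
def coc : PushoutCocone f g :=
  PushoutCocone.mk (W := B ⊕ {c : C // c ≠ g default})
    (TypeCat.ofHom Sum.inl)
    (TypeCat.ofHom fun c => if h : c = g default then Sum.inl (f default) else Sum.inr ⟨c, h⟩)
    (by ext y; simp [Unique.eq_default y])

open Classical in
def cocIsColimit : IsColimit (coc f g) := by
  apply PushoutCocone.IsColimit.mk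
  case desc => exact fun s => TypeCat.ofHom (Sum.elim s.inl (fun c => s.inr c.1))
  case fac_left => intro s; rfl
  case fac_right =>
    intro s
    ext c
    show Sum.elim s.inl (fun c : {c : C // c ≠ g default} => s.inr c.1)
      (if h : c = g default then Sum.inl (f default) else Sum.inr ⟨c, h⟩) = s.inr c
    split_ifs with h
    · subst h
      exact ConcreteCategory.congr_hom s.condition default
    · rfl
  case uniq =>
    intro s m h1 h2
    ext x
    cases x with
    | inl b => exact ConcreteCategory.congr_hom h1 b
    | inr c =>
      have h3 := ConcreteCategory.congr_hom h2 c.1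
      show m (Sum.inr c) = s.inr c.1
      rw [← h3]
      show m (Sum.inr c)
        = m (if h : c.1 = g default then Sum.inl (f default) else Sum.inr ⟨c.1, h⟩)
      rw [dif_neg c.2]

/-- Pushout along a singleton, explicitly. -/
def pushoutEquiv : (pushout f g : Type) ≃ (B ⊕ {c : C // c ≠ g default}) :=
  ((colimit.isoColimitCocone ⟨_, cocIsColimit f g⟩).toEquiv)

lemma card_ne {C : Type} [Finite C] (x : C) :
    Nat.card {c : C // c ≠ x} = Nat.card C - 1 := by
  classical
  have e := (Equiv.sumCompl (· = x)).symm
  have h1 : Nat.card {c : C // c = x} = 1 := by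
    have : Unique {c : C // c = x} := ⟨⟨⟨x, rfl⟩⟩, fun ⟨c, h⟩ => by subst h; rfl⟩
    exact Nat.card_unique
  have := Nat.card_congr e
  rw [Nat.card_sum, h1] at this
  simp only [ne_eq] at *
  omega

lemma card_pushout [Finite B] [Finite C] :
    Nat.card (pushout f g : Type) = Nat.card B + Nat.card C - 1 := by
  have : Nonempty C := ⟨g default⟩
  rw [Nat.card_congr (pushoutEquiv f g), Nat.card_sum, card_ne]
  have : 1 ≤ Nat.card C := Nat.card_pos
  omega

/-- Pullback over a subsingleton. -/
def pullbackEquiv {A B S : Type} [Subsingleton S] (f : A ⟶ S) (g : B ⟶ S) :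
    (pullback f g : Type) ≃ A × B :=
  (Types.pullbackIsoPullback f g).toEquiv.trans
    (Equiv.subtypeUnivEquiv (fun _ => Subsingleton.elim _ _))

lemma card_pullback {A B S : Type} [Subsingleton S] (f : A ⟶ S) (g : B ⟶ S) :
    Nat.card (pullback f g : Type) = Nat.card A * Nat.card B := by
  rw [Nat.card_congr (pullbackEquiv f g), Nat.card_prod]

end Stmt12Aux

/-- In the category `Set` (of types), if `S', S'', T'` are two-element
sets and `S, Y, T, T''` are singletons, then for every choice of functions between them
the set `(S' ×_S S'') +_Y (T' ×_T T'')` has exactly `5` elements while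
`(S' +_Y T') ×_{S +_Y T} (S'' +_Y T'')` has exactly `6` elements; in particular the two
are not isomorphic, so the interchange isomorphism fails without monic span legs. -/

theorem stmt12 (S' S'' T' S Y T T'' : Type)
    (hS' : Nat.card S' = 2) (hS'' : Nat.card S'' = 2) (hT' : Nat.card T' = 2)
    (hS : Nat.card S = 1) (hY : Nat.card Y = 1) (hT : Nat.card T = 1)
    (hT'' : Nat.card T'' = 1)
    (s' : S' ⟶ S) (s'' : S'' ⟶ S) (t' : T' ⟶ T) (t'' : T'' ⟶ T)
    (yS' : Y ⟶ S') (yS'' : Y ⟶ S'') (yT' : Y ⟶ T') (yT'' : Y ⟶ T'') :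
    Nat.card (pushout
      (pullback.lift (f := s') (g := s'') yS' yS''
        (by haveI := (Nat.card_eq_one_iff_unique.mp hS).1; ext y;
            exact Subsingleton.elim _ _))
      (pullback.lift (f := t') (g := t'') yT' yT''
        (by haveI := (Nat.card_eq_one_iff_unique.mp hT).1; ext y;
            exact Subsingleton.elim _ _))) = 5 ∧
    Nat.card (pullback
      (pushout.map yS' yT' (yS' ≫ s') (yT' ≫ t') s' t' (𝟙 Y)
        (by haveI := (Nat.card_eq_one_iff_unique.mp hS).1; ext y;
            exact Subsingleton.elim _ _)
        (by haveI := (Nat.card_eq_one_iff_unique.mp hT).1; ext y;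
            exact Subsingleton.elim _ _))
      (pushout.map yS'' yT'' (yS' ≫ s') (yT' ≫ t') s'' t'' (𝟙 Y)
        (by haveI := (Nat.card_eq_one_iff_unique.mp hS).1; ext y;
            exact Subsingleton.elim _ _)
        (by haveI := (Nat.card_eq_one_iff_unique.mp hT).1; ext y;
            exact Subsingleton.elim _ _))) = 6 ∧
    IsEmpty ((pushout
      (pullback.lift (f := s') (g := s'') yS' yS''
        (by haveI := (Nat.card_eq_one_iff_unique.mp hS).1; ext y;
            exact Subsingleton.elim _ _))
      (pullback.lift (f := t') (g := t'') yT' yT''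
        (by haveI := (Nat.card_eq_one_iff_unique.mp hT).1; ext y;
            exact Subsingleton.elim _ _))) ≅
    (pullback
      (pushout.map yS' yT' (yS' ≫ s') (yT' ≫ t') s' t' (𝟙 Y)
        (by haveI := (Nat.card_eq_one_iff_unique.mp hS).1; ext y;
            exact Subsingleton.elim _ _)
        (by haveI := (Nat.card_eq_one_iff_unique.mp hT).1; ext y;
            exact Subsingleton.elim _ _))
      (pushout.map yS'' yT'' (yS' ≫ s') (yT' ≫ t') s'' t'' (𝟙 Y)
        (by haveI := (Nat.card_eq_one_iff_unique.mp hS).1; ext y;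
            exact Subsingleton.elim _ _)
        (by haveI := (Nat.card_eq_one_iff_unique.mp hT).1; ext y;
            exact Subsingleton.elim _ _)))) := by
  
  haveI hYu : Unique Y := Nat.card_eq_one_iff_unique.mp hY |>.elim
    (fun h hn => @Unique.mk' Y ⟨hn.some⟩ h)
  haveI : Subsingleton S := (Nat.card_eq_one_iff_unique.mp hS).1
  haveI : Subsingleton T := (Nat.card_eq_one_iff_unique.mp hT).1
  haveI : Finite S' := Nat.finite_of_card_ne_zero (by omega)
  haveI : Finite S'' := Nat.finite_of_card_ne_zero (by omega)
  haveI : Finite T' := Nat.finite_of_card_ne_zero (by omega)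
  haveI : Finite S := Nat.finite_of_card_ne_zero (by omega)
  haveI : Finite T := Nat.finite_of_card_ne_zero (by omega)
  haveI : Finite T'' := Nat.finite_of_card_ne_zero (by omega)
  have hP : Nat.card (pullback s' s'' : Type) = 4 := by
    rw [Stmt12Aux.card_pullback, hS', hS'']
  have hQ : Nat.card (pullback t' t'' : Type) = 2 := by
    rw [Stmt12Aux.card_pullback, hT', hT'']
  haveI : Finite (pullback s' s'' : Type) := Nat.finite_of_card_ne_zero (by omega)
  haveI : Finite (pullback t' t'' : Type) := Nat.finite_of_card_ne_zero (by omega)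
  have h5 : Nat.card (pushout
      (pullback.lift (f := s') (g := s'') yS' yS''
        (by ext y; exact Subsingleton.elim _ _))
      (pullback.lift (f := t') (g := t'') yT' yT''
        (by ext y; exact Subsingleton.elim _ _)) : Type) = 5 := by
    rw [Stmt12Aux.card_pushout, hP, hQ]
  -- base pushout is a singleton
  have hW : Nat.card (pushout (yS' ≫ s') (yT' ≫ t') : Type) = 1 := by
    rw [Stmt12Aux.card_pushout, hS, hT]
  haveI : Subsingleton (pushout (yS' ≫ s') (yT' ≫ t') : Type) :=
    (Nat.card_eq_one_iff_unique.mp hW).1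
  have hA : Nat.card (pushout yS' yT' : Type) = 3 := by
    rw [Stmt12Aux.card_pushout, hS', hT']
  have hB : Nat.card (pushout yS'' yT'' : Type) = 2 := by
    rw [Stmt12Aux.card_pushout, hS'', hT'']
  have h6 : Nat.card (pullback
      (pushout.map yS' yT' (yS' ≫ s') (yT' ≫ t') s' t' (𝟙 Y)
        (by ext y; exact Subsingleton.elim _ _)
        (by ext y; exact Subsingleton.elim _ _))
      (pushout.map yS'' yT'' (yS' ≫ s') (yT' ≫ t') s'' t'' (𝟙 Y)
        (by ext y; exact Subsingleton.elim _ _)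
        (by ext y; exact Subsingleton.elim _ _)) : Type) = 6 := by
    rw [Stmt12Aux.card_pullback, hA, hB]
  refine ⟨h5, h6, ⟨fun i => ?_⟩⟩
  have := Nat.card_congr i.toEquiv
  rw [h5, h6] at this
  omega
end
end

section
/- Let C be a topos. Then: (a) monomorphisms are stable under pushout, i.e., given a pushout square with horizontal morphisms f : A → B and B → B +_A C and vertical morphisms g : A → C and C → B +_A C, if f is a monomorphism then the morphism C → B +_A C opposite to it is a monomorphism; and (b) every pushout square along a monomorphism is also a pullback square, i.e., if f : A → B is a monomorphism and the square with f, g : A → C and the pushout B +_A C is a pushout, then that square is a pullback. -/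
open CategoryTheory CategoryTheory.Limits

universe v u

section Aux

variable {𝒞 : Type u} [Category.{v} 𝒞] [HasFiniteLimits 𝒞]

lemma aux_sq1 {A B X : 𝒞} (f : A ⟶ B) (g : A ⟶ X) [Mono f] :
    IsPullback (prod.lift g (𝟙 A)) (𝟙 A) (prod.map (𝟙 X) f) (prod.lift g f) := by
  apply IsPullback.of_isLimit' ⟨by ext <;> simp⟩
  refine PullbackCone.IsLimit.mk _ (fun s => s.snd) (fun s => ?_) (fun s => by simp)
    (fun s m _ hm2 => by simpa using hm2)
  have h1 := s.condition =≫ prod.fst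
  have h2 := s.condition =≫ prod.snd
  simp only [Category.assoc, prod.map_fst, prod.lift_fst, prod.map_snd, prod.lift_snd,
    Category.comp_id] at h1 h2
  have h2' : s.fst ≫ prod.snd = s.snd := (cancel_mono f).mp (by simpa using h2)
  ext <;> simp [h1, h2', prod.lift_fst, prod.lift_snd]

lemma aux_sq2 {A X : 𝒞} (g : A ⟶ X) :
    IsPullback (prod.lift g (𝟙 A)) g (prod.map (𝟙 X) g) (prod.lift (𝟙 X) (𝟙 X)) := by
  apply IsPullback.of_isLimit' ⟨by ext <;> simp⟩
  refine PullbackCone.IsLimit.mk _ (fun s => s.fst ≫ prod.snd) (fun s => ?_) (fun s => ?_)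
    (fun s m hm1 _ => ?_)
  · have h1 := s.condition =≫ prod.fst
    have h2 := s.condition =≫ prod.snd
    simp only [Category.assoc, prod.map_fst, prod.lift_fst, prod.map_snd, prod.lift_snd,
      Category.comp_id] at h1 h2
    ext <;> simp [h1, h2, prod.lift_fst, prod.lift_snd]
  · have h2 := s.condition =≫ prod.snd
    simp only [Category.assoc, prod.map_snd, prod.lift_snd, Category.comp_id] at h2
    simpa using h2
  · have := hm1 =≫ prod.snd
    simpa [prod.lift_snd] using this

lemma aux_mono_pushout {Ω : 𝒞} {t : ⊤_ 𝒞 ⟶ Ω}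
    (hcl : ∀ {U X : 𝒞} (m : U ⟶ X), Mono m →
      ∃! χ : X ⟶ Ω, IsPullback m (terminal.from U) χ t)
    {A B X P : 𝒞} (f : A ⟶ B) (g : A ⟶ X) (h : B ⟶ P) (i : X ⟶ P)
    (hexp : (prod.functor.obj X).IsLeftAdjoint)
    (H : IsPushout f g h i) (hf : Mono f) : Mono i := by
  haveI := hf
  -- the diagonal of X is a mono
  have hδ : Mono (prod.lift (𝟙 X) (𝟙 X)) := by
    haveI : Mono (prod.lift (𝟙 X) (𝟙 X) ≫ prod.fst) := by
      rw [prod.lift_fst]; infer_instance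
    exact mono_of_mono _ prod.fst
  have hm' : Mono (prod.lift g f) := by
    haveI : Mono (prod.lift g f ≫ prod.snd) := by rw [prod.lift_snd]; infer_instance
    exact mono_of_mono _ prod.snd
  have hl : Mono (prod.lift g (𝟙 A)) := by
    haveI : Mono (prod.lift g (𝟙 A) ≫ prod.snd) := by rw [prod.lift_snd]; infer_instance
    exact mono_of_mono _ prod.snd
  obtain ⟨χδ, Pδ, -⟩ := hcl _ hδ
  obtain ⟨χm, Pm, -⟩ := hcl _ hm'
  obtain ⟨χl, -, huniq⟩ := hcl _ hl
  -- the key equality of characteristic maps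
  have key : prod.map (𝟙 X) f ≫ χm = prod.map (𝟙 X) g ≫ χδ := by
    have P1 : IsPullback (prod.lift g (𝟙 A)) (terminal.from A)
        (prod.map (𝟙 X) f ≫ χm) t := by
      simpa using (aux_sq1 f g).paste_vert Pm
    have P2 : IsPullback (prod.lift g (𝟙 A)) (terminal.from A)
        (prod.map (𝟙 X) g ≫ χδ) t := by
      have := (aux_sq2 g).paste_vert Pδ
      simpa [terminal.comp_from] using this
    rw [huniq _ P1, huniq _ P2]
  -- transpose along the adjunction
  haveI := hexp
  let adj := Adjunction.ofIsLeftAdjoint (prod.functor.obj X)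
  let G := (prod.functor.obj X).rightAdjoint
  let η : X ⟶ G.obj Ω := (adj.homEquiv X Ω) χδ
  let k : B ⟶ G.obj Ω := (adj.homEquiv B Ω) χm
  have key' : (prod.functor.obj X).map f ≫ χm = (prod.functor.obj X).map g ≫ χδ := key
  have hcomm : f ≫ k = g ≫ η := by
    have h4 := congrArg (adj.homEquiv A Ω) key'
    erw [adj.homEquiv_naturality_left, adj.homEquiv_naturality_left] at h4; exact h4
  -- η is a mono
  have hη : Mono η := by
    constructor
    intro T u v huv
    have h1 : (prod.functor.obj X).map u ≫ χδ = (prod.functor.obj X).map v ≫ χδ := by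
      apply (adj.homEquiv T Ω).injective
      erw [adj.homEquiv_naturality_left, adj.homEquiv_naturality_left]
      exact huv
    have h2 : prod.lift v u ≫ χδ = terminal.from T ≫ t := by
      have h3 := prod.lift v (𝟙 T) ≫= h1
      have e1 : prod.lift v (𝟙 T) ≫ (prod.functor.obj X).map u = prod.lift v u := by
        show prod.lift v (𝟙 T) ≫ prod.map (𝟙 X) u = _
        ext <;> simp
      have e2 : prod.lift v (𝟙 T) ≫ (prod.functor.obj X).map v =
          v ≫ prod.lift (𝟙 X) (𝟙 X) := by
        show prod.lift v (𝟙 T) ≫ prod.map (𝟙 X) v = _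
        ext <;> simp
      erw [← Category.assoc, ← Category.assoc, e1, e2] at h3
      erw [h3, Category.assoc, Pδ.w, ← Category.assoc, terminal.comp_from]
    let a := Pδ.lift (prod.lift v u) (terminal.from T) h2
    have ha : a ≫ prod.lift (𝟙 X) (𝟙 X) = prod.lift v u := Pδ.lift_fst _ _ _
    have hu : u = a := by
      have := ha =≫ prod.snd
      simpa [prod.lift_snd] using this.symm
    have hv : v = a := by
      have := ha =≫ prod.fst
      simpa [prod.lift_fst] using this.symm
    rw [hu, hv]
  -- conclude
  haveI : Mono (i ≫ H.desc k η hcomm) := by rw [H.inr_desc]; exact hη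
  exact mono_of_mono i (H.desc k η hcomm)

end Aux

section Aux2

variable {𝒞 : Type u} [Category.{v} 𝒞] [HasFiniteLimits 𝒞]

lemma aux_pullback_of_pushout {Ω : 𝒞} {t : ⊤_ 𝒞 ⟶ Ω}
    (hcl : ∀ {U X : 𝒞} (m : U ⟶ X), Mono m →
      ∃! χ : X ⟶ Ω, IsPullback m (terminal.from U) χ t)
    {A B X P : 𝒞} (f : A ⟶ B) (g : A ⟶ X) (h : B ⟶ P) (i : X ⟶ P)
    (H : IsPushout f g h i) (hf : Mono f) (hi : Mono i) : IsPullback f g h i := by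
  haveI := hf; haveI := hi
  obtain ⟨χf, Pf, -⟩ := hcl f hf
  have hw : f ≫ χf = g ≫ (terminal.from X ≫ t) := by
    rw [Pf.w, ← Category.assoc, terminal.comp_from]
  let χ' : P ⟶ Ω := H.desc χf (terminal.from X ≫ t) hw
  have hχ1 : h ≫ χ' = χf := H.inl_desc _ _ _
  have hχ2 : i ≫ χ' = terminal.from X ≫ t := H.inr_desc _ _ _
  apply IsPullback.of_isLimit' ⟨H.w⟩
  refine PullbackCone.IsLimit.mk _ (fun s => Pf.lift s.fst (terminal.from s.pt) ?_)
    (fun s => Pf.lift_fst _ _ _) (fun s => ?_) (fun s m hm1 _ => ?_)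
  · rw [← hχ1, ← Category.assoc, s.condition, Category.assoc, hχ2,
      ← Category.assoc, terminal.comp_from]
  · rw [← cancel_mono i, Category.assoc, ← H.w, ← Category.assoc, Pf.lift_fst, s.condition]
  · rw [← cancel_mono f, Pf.lift_fst, hm1]

end Aux2


/-- In a topos: (a) monomorphisms are stable under pushout, and (b)
every pushout square along a monomorphism is also a pullback square. -/
theorem stmt14 {𝒞 : Type u} [Category.{v} 𝒞] [IsTopos 𝒞] [HasFiniteColimits 𝒞] :
    (∀ {A B X P : 𝒞} (f : A ⟶ B) (g : A ⟶ X) (h : B ⟶ P) (i : X ⟶ P),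
      IsPushout f g h i → Mono f → Mono i) ∧
    (∀ {A B X P : 𝒞} (f : A ⟶ B) (g : A ⟶ X) (h : B ⟶ P) (i : X ⟶ P),
      IsPushout f g h i → Mono f → IsPullback f g h i) := by
  obtain ⟨Ω, t, hcl⟩ := IsTopos.hasSubobjectClassifier.exists_classifier (C := 𝒞)
  have ha : ∀ {A B X P : 𝒞} (f : A ⟶ B) (g : A ⟶ X) (h : B ⟶ P) (i : X ⟶ P),
      IsPushout f g h i → Mono f → Mono i := fun f g h i H hf =>
    aux_mono_pushout hcl f g h i (IsTopos.cartesianClosed _) H hf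
  exact ⟨ha, fun f g h i H hf =>
    aux_pullback_of_pushout hcl f g h i H hf (ha f g h i H hf)⟩
end

section
/- Let C be a topos and consider a commutative cube in C whose top face and bottom face consist entirely of monomorphisms. Suppose the top face is a pullback square and the two front faces of the cube are pushout squares. Then the bottom face is a pullback square if and only if the two back faces are pushout squares. -/
open CategoryTheory CategoryTheory.Limits

universe v u

namespace Stmt15Aux

variable {𝒞 : Type u} [Category.{v} 𝒞]

/-- Build an `IsPullback` from an explicit lifting property together with joint monicity of
the two legs. -/
lemma isPullback_of_exists_lift {P X Y Z : 𝒞} {fst : P ⟶ X} {snd : P ⟶ Y} {f : X ⟶ Z}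
    {g : Y ⟶ Z} (w : fst ≫ f = snd ≫ g)
    (uniq : ∀ {T : 𝒞} (w₁ w₂ : T ⟶ P), w₁ ≫ fst = w₂ ≫ fst → w₁ ≫ snd = w₂ ≫ snd → w₁ = w₂)
    (lift : ∀ {T : 𝒞} (a : T ⟶ X) (b : T ⟶ Y), a ≫ f = b ≫ g →
      ∃ w : T ⟶ P, w ≫ fst = a ∧ w ≫ snd = b) :
    IsPullback fst snd f g := by
  refine IsPullback.of_isLimit' ⟨w⟩ (PullbackCone.IsLimit.mk w
    (fun s => (lift s.fst s.snd s.condition).choose)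
    (fun s => (lift s.fst s.snd s.condition).choose_spec.1)
    (fun s => (lift s.fst s.snd s.condition).choose_spec.2)
    (fun s m h₁ h₂ => uniq _ _
      (by rw [h₁, (lift s.fst s.snd s.condition).choose_spec.1])
      (by rw [h₂, (lift s.fst s.snd s.condition).choose_spec.2])))

/-- A monomorphism with a section is an isomorphism. -/
lemma isIso_of_mono_of_section {E B : 𝒞} {m : E ⟶ B} (hm : Mono m) {w : B ⟶ E}
    (hw : w ≫ m = 𝟙 B) : IsIso m := by
  refine ⟨w, ?_, hw⟩
  apply hm.right_cancellation
  rw [Category.assoc, hw, Category.comp_id, Category.id_comp]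

section Classifier

variable [HasTerminal 𝒞]

/-- A bundled subobject classifier with chosen characteristic maps. -/
structure Cls (𝒞 : Type u) [Category.{v} 𝒞] [HasTerminal 𝒞] where
  Ω : 𝒞
  t : ⊤_ 𝒞 ⟶ Ω
  χ : ∀ {U X : 𝒞} (m : U ⟶ X), Mono m → (X ⟶ Ω)
  isPB : ∀ {U X : 𝒞} (m : U ⟶ X) (hm : Mono m), IsPullback m (terminal.from U) (χ m hm) t
  uniq : ∀ {U X : 𝒞} (m : U ⟶ X) (hm : Mono m) (c : X ⟶ Ω),
    IsPullback m (terminal.from U) c t → c = χ m hm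

noncomputable def mkCls [_root_.HasSubobjectClassifier 𝒞] : Cls 𝒞 :=
  let h := _root_.HasSubobjectClassifier.exists_classifier (C := 𝒞)
  { Ω := h.choose
    t := h.choose_spec.choose
    χ := fun m hm => (h.choose_spec.choose_spec m hm).choose
    isPB := fun m hm => (h.choose_spec.choose_spec m hm).choose_spec.1
    uniq := fun m hm c hc => (h.choose_spec.choose_spec m hm).choose_spec.2 c hc }

/-- If the subobject `n` of `W` is the pullback of the subobject `m` of `Z` along `k : W ⟶ Z`
(witnessed by `j` on the total spaces), then `k ≫ χ m = χ n`. -/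
lemma Cls.comp (C : Cls 𝒞) {M N W Z : 𝒞} {m : M ⟶ Z} (hm : Mono m) {n : N ⟶ W} (hn : Mono n)
    {k : W ⟶ Z} {j : N ⟶ M} (h : IsPullback j n m k) :
    k ≫ C.χ m hm = C.χ n hn := by
  apply C.uniq
  have := h.flip.paste_vert (C.isPB m hm)
  rwa [terminal.comp_from] at this

lemma Cls.w (C : Cls 𝒞) {U X : 𝒞} (m : U ⟶ X) (hm : Mono m) :
    m ≫ C.χ m hm = terminal.from U ≫ C.t := (C.isPB m hm).w

end Classifier

section PMCsec

variable [HasTerminal 𝒞] [HasBinaryProducts 𝒞]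

attribute [local simp] prod.lift_fst prod.lift_snd prod.lift_fst_assoc prod.lift_snd_assoc

lemma mono_lift_of_mono_snd {U A V : 𝒞} (h : U ⟶ V) (i : U ⟶ A) (hi : Mono i) :
    Mono (prod.lift h i) :=
  ⟨fun u v e => hi.right_cancellation u v (by
    have := congrArg (fun q => q ≫ prod.snd) e
    simpa using this)⟩

/-- A "weak partial map classifier" for `V`: every partial map `(i : U ⟶ A, h : U ⟶ V)`
with `i` mono fits into a pullback square over `σ : V ⟶ PV`, compatibly with pulling back
partial maps. -/
structure PMC (C : Cls 𝒞) (V : 𝒞) where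
  PV : 𝒞
  σ : V ⟶ PV
  mono_σ : Mono σ
  cl : ∀ {U A : 𝒞} (i : U ⟶ A) (h : U ⟶ V), Mono i → (A ⟶ PV)
  isPB : ∀ {U A : 𝒞} (i : U ⟶ A) (h : U ⟶ V) (hi : Mono i), IsPullback i h (cl i h hi) σ
  comp : ∀ {U A U' A' : 𝒞} (i : U ⟶ A) (h : U ⟶ V) (hi : Mono i)
      (i' : U' ⟶ A') (h' : U' ⟶ V) (hi' : Mono i') (k : A' ⟶ A) (j : U' ⟶ U),
      IsPullback j i' i k → j ≫ h = h' → k ≫ cl i h hi = cl i' h' hi'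

noncomputable def mkPMC (C : Cls 𝒞) (V : 𝒞) (hV : (prod.functor.obj V).IsLeftAdjoint) :
    PMC C V := by
  haveI := hV
  let F := prod.functor.obj V
  let adj : F ⊣ F.rightAdjoint := Adjunction.ofIsLeftAdjoint F
  -- the diagonal of V and its characteristic map
  let Δ : V ⟶ V ⨯ V := prod.lift (𝟙 V) (𝟙 V)
  have hΔ : Mono Δ := mono_lift_of_mono_snd _ _ inferInstance
  -- the singleton map
  let σ : V ⟶ F.rightAdjoint.obj C.Ω := (adj.homEquiv V C.Ω) (C.χ Δ hΔ)
  have unc : ∀ {A B : 𝒞} (k : A ⟶ B) (c : (V ⨯ B) ⟶ C.Ω),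
      (adj.homEquiv A C.Ω).symm (k ≫ (adj.homEquiv B C.Ω) c) = prod.map (𝟙 V) k ≫ c := by
    intro A B k c
    rw [Adjunction.homEquiv_naturality_left_symm]; erw [Equiv.symm_apply_apply]
    rfl
  have monoR : ∀ {U A : 𝒞} (i : U ⟶ A) (h : U ⟶ V), Mono i → Mono (prod.lift h i) :=
    fun i h hi => mono_lift_of_mono_snd h i hi
  refine
    { PV := F.rightAdjoint.obj C.Ω
      σ := σ
      mono_σ := ?_
      cl := fun {U A} i h hi => (adj.homEquiv A C.Ω) (C.χ (prod.lift h i) (monoR i h hi))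
      isPB := ?_
      comp := ?_ }
  · -- σ is mono
    constructor
    intro S u v e
    have e' : prod.map (𝟙 V) u ≫ C.χ Δ hΔ = prod.map (𝟙 V) v ≫ C.χ Δ hΔ := by
      rw [← unc u (C.χ Δ hΔ), ← unc v (C.χ Δ hΔ)]; exact congrArg _ e
    have e'' : prod.lift v u ≫ C.χ Δ hΔ = terminal.from S ≫ C.t :=
      calc prod.lift v u ≫ C.χ Δ hΔ
          = prod.lift v (𝟙 S) ≫ prod.map (𝟙 V) u ≫ C.χ Δ hΔ := by
            rw [← Category.assoc, prod.lift_map]; simp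
        _ = prod.lift v (𝟙 S) ≫ prod.map (𝟙 V) v ≫ C.χ Δ hΔ := by rw [e']
        _ = (v ≫ Δ) ≫ C.χ Δ hΔ := by
            rw [← Category.assoc, prod.lift_map]
            congr 2
            apply Limits.prod.hom_ext <;> simp [Δ]
        _ = terminal.from S ≫ C.t := by
            rw [Category.assoc, C.w Δ hΔ, ← Category.assoc, terminal.comp_from]
    set w := (C.isPB Δ hΔ).lift (prod.lift v u) (terminal.from S) e'' with hwdef
    have hw : w ≫ Δ = prod.lift v u := (C.isPB Δ hΔ).lift_fst _ _ e''
    have h1 : w = v := by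
      have := congrArg (fun q => q ≫ prod.fst) hw; simpa [Δ] using this
    have h2 : w = u := by
      have := congrArg (fun q => q ≫ prod.snd) hw; simpa [Δ] using this
    rw [← h1, ← h2]
  · -- the classifying squares
    intro U A i h hi
    have hR := monoR i h hi
    -- commutativity
    have comm : i ≫ (adj.homEquiv A C.Ω) (C.χ (prod.lift h i) hR) = h ≫ σ := by
      apply (adj.homEquiv U C.Ω).symm.injective
      erw [unc i (C.χ (prod.lift h i) hR), unc h (C.χ Δ hΔ)]
      have hN := monoR (𝟙 U) h inferInstance
      have pb1 : IsPullback (𝟙 U) (prod.lift h (𝟙 U)) (prod.lift h i) (prod.map (𝟙 V) i) := by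
        refine isPullback_of_exists_lift (by apply Limits.prod.hom_ext <;> simp) ?_ ?_
        · intro T w₁ w₂ h₁ _; simpa using h₁
        · intro T a b hab
          have hab1 : a ≫ h = b ≫ prod.fst := by
            have := congrArg (fun q => q ≫ prod.fst) hab; simpa using this
          have hab2 : a ≫ i = (b ≫ prod.snd) ≫ i := by
            have := congrArg (fun q => q ≫ prod.snd) hab; simpa using this
          have hab2' : a = b ≫ prod.snd := hi.right_cancellation _ _ hab2
          exact ⟨a, by simp, by apply Limits.prod.hom_ext <;> simp [hab1, ← hab2']⟩
      have pb2 : IsPullback h (prod.lift h (𝟙 U)) Δ (prod.map (𝟙 V) h) := by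
        refine isPullback_of_exists_lift (by apply Limits.prod.hom_ext <;> simp [Δ]) ?_ ?_
        · intro T w₁ w₂ _ h₂
          have := congrArg (fun q => q ≫ prod.snd) h₂; simpa using this
        · intro T a b hab
          have hab1 : a = b ≫ prod.fst := by
            have := congrArg (fun q => q ≫ prod.fst) hab; simpa [Δ] using this
          have hab2 : a = b ≫ prod.snd ≫ h := by
            have := congrArg (fun q => q ≫ prod.snd) hab; simpa [Δ] using this
          refine ⟨b ≫ prod.snd, by rw [Category.assoc]; exact hab2.symm, ?_⟩
          apply Limits.prod.hom_ext <;> simp [← hab1, hab2]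
      rw [C.comp hR hN pb1, C.comp hΔ hN pb2]
    -- the pullback property
    refine isPullback_of_exists_lift comm ?_ ?_
    · intro T w₁ w₂ h₁ _; exact hi.right_cancellation _ _ h₁
    · intro T a b hab
      have keyT : prod.lift b a ≫ C.χ (prod.lift h i) hR = terminal.from T ≫ C.t := by
        have e1 : prod.map (𝟙 V) a ≫ C.χ (prod.lift h i) hR = prod.map (𝟙 V) b ≫ C.χ Δ hΔ := by
          rw [← unc a (C.χ (prod.lift h i) hR), ← unc b (C.χ Δ hΔ)]; exact congrArg _ hab
        calc prod.lift b a ≫ C.χ (prod.lift h i) hR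
            = prod.lift b (𝟙 T) ≫ prod.map (𝟙 V) a ≫ C.χ (prod.lift h i) hR := by
              rw [← Category.assoc, prod.lift_map]; simp
          _ = prod.lift b (𝟙 T) ≫ prod.map (𝟙 V) b ≫ C.χ Δ hΔ := by rw [e1]
          _ = (b ≫ Δ) ≫ C.χ Δ hΔ := by
              rw [← Category.assoc, prod.lift_map]
              congr 2
              apply Limits.prod.hom_ext <;> simp [Δ]
          _ = terminal.from T ≫ C.t := by
              rw [Category.assoc, C.w Δ hΔ, ← Category.assoc, terminal.comp_from]
      set w := (C.isPB (prod.lift h i) hR).lift (prod.lift b a) (terminal.from T) keyT with hwdef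
      have hw : w ≫ prod.lift h i = prod.lift b a :=
        (C.isPB (prod.lift h i) hR).lift_fst _ _ keyT
      refine ⟨w, ?_, ?_⟩
      · have := congrArg (fun q => q ≫ prod.snd) hw
        simpa using this
      · have := congrArg (fun q => q ≫ prod.fst) hw
        simpa using this
  · -- compatibility with pulling back partial maps
    intro U A U' A' i h hi i' h' hi' k j hpb hjh
    have hR := monoR i h hi
    have hR' := monoR i' h' hi'
    apply (adj.homEquiv A' C.Ω).symm.injective
    erw [unc k (C.χ (prod.lift h i) hR), Equiv.symm_apply_apply]
    have pb : IsPullback j (prod.lift h' i') (prod.lift h i) (prod.map (𝟙 V) k) := by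
      refine isPullback_of_exists_lift ?_ ?_ ?_
      · apply Limits.prod.hom_ext <;> simp [hjh, hpb.w]
      · intro T w₁ w₂ _ h₂
        have := congrArg (fun q => q ≫ prod.snd) h₂
        simp only [Category.assoc, prod.lift_snd] at this
        exact hi'.right_cancellation _ _ this
      · intro T a b hab
        have hab1 : a ≫ h = b ≫ prod.fst := by
          have := congrArg (fun q => q ≫ prod.fst) hab; simpa using this
        have hab2 : a ≫ i = (b ≫ prod.snd) ≫ k := by
          have := congrArg (fun q => q ≫ prod.snd) hab; simpa using this
        refine ⟨hpb.lift a (b ≫ prod.snd) hab2, hpb.lift_fst _ _ _, ?_⟩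
        apply Limits.prod.hom_ext
        · simp only [Category.assoc, prod.lift_fst]
          rw [← hjh, ← Category.assoc, hpb.lift_fst]
          exact hab1
        · simp only [Category.assoc, prod.lift_snd]
          exact hpb.lift_snd _ _ _
    exact C.comp hR hR' pb

end PMCsec

end Stmt15Aux

/-- In a topos, consider a commutative cube whose top face
`(fst', snd', f', g')` and bottom face `(fst, snd, f, g)` consist entirely of
monomorphisms, with vertical edges `p, x, y, z` connecting the top face to the bottom
face. If the top face is a pullback and the two front faces are pushouts, then the bottom
face is a pullback if and only if the two back faces are pushouts. -/
theorem stmt15 {𝒞 : Type u} [Category.{v} 𝒞] [IsTopos 𝒞] [HasFiniteColimits 𝒞]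
    {P' X' Y' Z' P X Y Z : 𝒞}
    -- the top face
    (fst' : P' ⟶ X') (snd' : P' ⟶ Y') (f' : X' ⟶ Z') (g' : Y' ⟶ Z')
    -- the bottom face
    (fst : P ⟶ X) (snd : P ⟶ Y) (f : X ⟶ Z) (g : Y ⟶ Z)
    -- the vertical edges
    (p : P' ⟶ P) (x : X' ⟶ X) (y : Y' ⟶ Y) (z : Z' ⟶ Z)
    -- the top and bottom faces consist of monomorphisms
    [Mono fst'] [Mono snd'] [Mono f'] [Mono g']
    [Mono fst] [Mono snd] [Mono f] [Mono g]
    -- the cube commutes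
    (hback₁ : fst' ≫ x = p ≫ fst) (hback₂ : snd' ≫ y = p ≫ snd)
    (hbot : fst ≫ f = snd ≫ g)
    -- the top face is a pullback
    (htop : IsPullback fst' snd' f' g')
    -- the two front faces are pushouts
    (hfront₁ : IsPushout f' x z f) (hfront₂ : IsPushout g' y z g) :
    IsPullback fst snd f g ↔ (IsPushout fst' p x fst ∧ IsPushout snd' p y snd) := by
  haveI hSC : _root_.HasSubobjectClassifier 𝒞 := IsTopos.hasSubobjectClassifier
  have C : Stmt15Aux.Cls 𝒞 := Stmt15Aux.mkCls
  have PM : ∀ V : 𝒞, Stmt15Aux.PMC C V := fun V =>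
    Stmt15Aux.mkPMC C V (IsTopos.cartesianClosed V)
  -- In a topos, a pushout along a monomorphism is a pullback.
  have S1 : ∀ {W A B D : 𝒞} {a : W ⟶ A} {b : W ⟶ B} {c : A ⟶ D} {d : B ⟶ D},
      Mono a → IsPushout a b c d → IsPullback a b c d := by
    intro W A B D a b c d ha hpo
    have hw : a ≫ (PM B).cl a b ha = b ≫ (PM B).σ := ((PM B).isPB a b ha).w
    refine Stmt15Aux.isPullback_of_exists_lift hpo.w ?_ ?_
    · intro T w₁ w₂ h₁ _
      exact ha.right_cancellation _ _ h₁
    · intro T s₁ s₂ hs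
      have key : s₁ ≫ (PM B).cl a b ha = s₂ ≫ (PM B).σ := by
        calc s₁ ≫ (PM B).cl a b ha
            = s₁ ≫ c ≫ hpo.desc _ _ hw := by rw [hpo.inl_desc _ _ hw]
          _ = s₂ ≫ d ≫ hpo.desc _ _ hw := by
              rw [← Category.assoc, hs, Category.assoc]
          _ = s₂ ≫ (PM B).σ := by rw [hpo.inr_desc _ _ hw]
      exact ⟨((PM B).isPB a b ha).lift s₁ s₂ key,
        ((PM B).isPB a b ha).lift_fst s₁ s₂ key, ((PM B).isPB a b ha).lift_snd s₁ s₂ key⟩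
  have hF1 : IsPullback f' x z f := S1 inferInstance hfront₁
  have hF2 : IsPullback g' y z g := S1 inferInstance hfront₂
  constructor
  · -- bottom pullback ⟹ back faces pushouts
    intro hbotPB
    -- the back faces are pullbacks
    have BP1 : IsPullback fst' p x fst := by
      refine Stmt15Aux.isPullback_of_exists_lift hback₁ ?_ ?_
      · intro T w₁ w₂ h₁ _
        exact (cancel_mono fst').1 h₁
      · intro T t₁ t₂ ht
        have hr : (t₁ ≫ f') ≫ z = (t₂ ≫ snd) ≫ g := by
          rw [Category.assoc, hfront₁.w, ← Category.assoc, ht, Category.assoc, hbot,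
            ← Category.assoc]
        have r := hF2.lift (t₁ ≫ f') (t₂ ≫ snd) hr
        have hcond : t₁ ≫ f' = hF2.lift (t₁ ≫ f') (t₂ ≫ snd) hr ≫ g' :=
          (hF2.lift_fst _ _ hr).symm
        refine ⟨htop.lift t₁ _ hcond, htop.lift_fst _ _ hcond, ?_⟩
        apply (cancel_mono fst).1
        rw [Category.assoc, ← hback₁, ← Category.assoc, htop.lift_fst, ht]
    have BP2 : IsPullback snd' p y snd := by
      refine Stmt15Aux.isPullback_of_exists_lift hback₂ ?_ ?_
      · intro T w₁ w₂ h₁ _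
        exact (cancel_mono snd').1 h₁
      · intro T t₁ t₂ ht
        have hr : (t₁ ≫ g') ≫ z = (t₂ ≫ fst) ≫ f := by
          rw [Category.assoc, hfront₂.w, ← Category.assoc, ht, Category.assoc, ← hbot,
            ← Category.assoc]
        have hcond : hF1.lift (t₁ ≫ g') (t₂ ≫ fst) hr ≫ f' = t₁ ≫ g' :=
          hF1.lift_fst _ _ hr
        refine ⟨htop.lift _ t₁ hcond, htop.lift_snd _ _ hcond, ?_⟩
        apply (cancel_mono snd).1
        rw [Category.assoc, ← hback₂, ← Category.assoc, htop.lift_snd, ht]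
    -- cover lemma for Y : a subobject of Y through which y and snd factor is everything
    have coverY : ∀ {E : 𝒞} (m : E ⟶ Y), Mono m → ∀ (uu : Y' ⟶ E), uu ≫ m = y →
        ∀ (vv : P ⟶ E), vv ≫ m = snd → ∃ w : Y ⟶ E, w ≫ m = 𝟙 Y := by
      intro E m hm uu hu vv hv
      haveI : Mono m := hm
      have hmg : Mono (m ≫ g) := mono_comp m g
      have pbA : IsPullback vv fst (m ≫ g) f := by
        refine Stmt15Aux.isPullback_of_exists_lift ?_ ?_ ?_
        · rw [← Category.assoc, hv]; exact hbot.symm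
        · intro T w₁ w₂ _ h₂
          exact (cancel_mono fst).1 h₂
        · intro T s₁ s₂ hs
          have hss : s₂ ≫ f = (s₁ ≫ m) ≫ g := by rw [Category.assoc]; exact hs.symm
          refine ⟨hbotPB.lift s₂ (s₁ ≫ m) hss, ?_, hbotPB.lift_fst _ _ hss⟩
          apply (cancel_mono m).1
          rw [Category.assoc, hv, hbotPB.lift_snd]
      have pbB : IsPullback uu g' (m ≫ g) z := by
        refine Stmt15Aux.isPullback_of_exists_lift ?_ ?_ ?_
        · rw [← Category.assoc, hu]; exact hfront₂.w.symm
        · intro T w₁ w₂ _ h₂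
          exact (cancel_mono g').1 h₂
        · intro T s₁ s₂ hs
          have hss : s₂ ≫ z = (s₁ ≫ m) ≫ g := by rw [Category.assoc]; exact hs.symm
          refine ⟨hF2.lift s₂ (s₁ ≫ m) hss, ?_, hF2.lift_fst _ _ hss⟩
          apply (cancel_mono m).1
          rw [Category.assoc, hu, hF2.lift_snd]
      have eq1 : f ≫ C.χ (m ≫ g) hmg = C.χ fst inferInstance := C.comp hmg inferInstance pbA
      have eq2 : z ≫ C.χ (m ≫ g) hmg = C.χ g' inferInstance := C.comp hmg inferInstance pbB
      have eq3 : f ≫ C.χ g inferInstance = C.χ fst inferInstance :=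
        C.comp inferInstance inferInstance hbotPB.flip
      have eq4 : z ≫ C.χ g inferInstance = C.χ g' inferInstance :=
        C.comp inferInstance inferInstance hF2.flip
      have main : C.χ (m ≫ g) hmg = C.χ g inferInstance :=
        hfront₁.hom_ext (by rw [eq2, eq4]) (by rw [eq1, eq3])
      have hg : g ≫ C.χ (m ≫ g) hmg = terminal.from Y ≫ C.t := by
        rw [main, C.w]
      refine ⟨(C.isPB (m ≫ g) hmg).lift g (terminal.from Y) hg, ?_⟩
      have hlift := (C.isPB (m ≫ g) hmg).lift_fst g (terminal.from Y) hg
      apply (cancel_mono g).1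
      rw [Category.assoc, hlift, Category.id_comp]
    -- cover lemma for X
    have coverX : ∀ {E : 𝒞} (m : E ⟶ X), Mono m → ∀ (uu : X' ⟶ E), uu ≫ m = x →
        ∀ (vv : P ⟶ E), vv ≫ m = fst → ∃ w : X ⟶ E, w ≫ m = 𝟙 X := by
      intro E m hm uu hu vv hv
      haveI : Mono m := hm
      have hmf : Mono (m ≫ f) := mono_comp m f
      have pbA : IsPullback vv snd (m ≫ f) g := by
        refine Stmt15Aux.isPullback_of_exists_lift ?_ ?_ ?_
        · rw [← Category.assoc, hv]; exact hbot
        · intro T w₁ w₂ _ h₂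
          exact (cancel_mono snd).1 h₂
        · intro T s₁ s₂ hs
          have hss : (s₁ ≫ m) ≫ f = s₂ ≫ g := by rw [Category.assoc]; exact hs
          refine ⟨hbotPB.lift (s₁ ≫ m) s₂ hss, ?_, hbotPB.lift_snd _ _ hss⟩
          apply (cancel_mono m).1
          rw [Category.assoc, hv, hbotPB.lift_fst]
      have pbB : IsPullback uu f' (m ≫ f) z := by
        refine Stmt15Aux.isPullback_of_exists_lift ?_ ?_ ?_
        · rw [← Category.assoc, hu]; exact hfront₁.w.symm
        · intro T w₁ w₂ _ h₂
          exact (cancel_mono f').1 h₂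
        · intro T s₁ s₂ hs
          have hss : s₂ ≫ z = (s₁ ≫ m) ≫ f := by rw [Category.assoc]; exact hs.symm
          refine ⟨hF1.lift s₂ (s₁ ≫ m) hss, ?_, hF1.lift_fst _ _ hss⟩
          apply (cancel_mono m).1
          rw [Category.assoc, hu, hF1.lift_snd]
      have eq1 : g ≫ C.χ (m ≫ f) hmf = C.χ snd inferInstance := C.comp hmf inferInstance pbA
      have eq2 : z ≫ C.χ (m ≫ f) hmf = C.χ f' inferInstance := C.comp hmf inferInstance pbB
      have eq3 : g ≫ C.χ f inferInstance = C.χ snd inferInstance :=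
        C.comp inferInstance inferInstance hbotPB
      have eq4 : z ≫ C.χ f inferInstance = C.χ f' inferInstance :=
        C.comp inferInstance inferInstance hF1.flip
      have main : C.χ (m ≫ f) hmf = C.χ f inferInstance :=
        hfront₂.hom_ext (by rw [eq2, eq4]) (by rw [eq1, eq3])
      have hg : f ≫ C.χ (m ≫ f) hmf = terminal.from X ≫ C.t := by
        rw [main, C.w]
      refine ⟨(C.isPB (m ≫ f) hmf).lift f (terminal.from X) hg, ?_⟩
      have hlift := (C.isPB (m ≫ f) hmf).lift_fst f (terminal.from X) hg
      apply (cancel_mono f).1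
      rw [Category.assoc, hlift, Category.id_comp]
    constructor
    · -- back face 1 is a pushout
      have mk : ∀ {T : 𝒞} (a : X' ⟶ T) (b : P ⟶ T), fst' ≫ a = p ≫ b →
          ∃ d : X ⟶ T, x ≫ d = a ∧ fst ≫ d = b := by
        intro T a b hab
        haveI : Mono (PM T).σ := (PM T).mono_σ
        have e1 : y ≫ (PM T).cl snd b inferInstance = (PM T).cl snd' (p ≫ b) inferInstance :=
          (PM T).comp snd b inferInstance snd' (p ≫ b) inferInstance y p BP2.flip rfl
        have e2 : g' ≫ (PM T).cl f' a inferInstance = (PM T).cl snd' (p ≫ b) inferInstance := by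
          have h0 : g' ≫ (PM T).cl f' a inferInstance
              = (PM T).cl snd' (fst' ≫ a) inferInstance :=
            (PM T).comp f' a inferInstance snd' (fst' ≫ a) inferInstance g' fst' htop rfl
          rwa [hab] at h0
        have compat : g' ≫ (PM T).cl f' a inferInstance = y ≫ (PM T).cl snd b inferInstance := by
          rw [e1, e2]
        have hψ1 : z ≫ hfront₂.desc _ _ compat = (PM T).cl f' a inferInstance :=
          hfront₂.inl_desc _ _ compat
        have hψ2 : g ≫ hfront₂.desc _ _ compat = (PM T).cl snd b inferInstance :=
          hfront₂.inr_desc _ _ compat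
        have hx : x ≫ f ≫ hfront₂.desc _ _ compat = a ≫ (PM T).σ := by
          rw [← Category.assoc, ← hfront₁.w, Category.assoc, hψ1]
          exact ((PM T).isPB f' a inferInstance).w
        have hfst : fst ≫ f ≫ hfront₂.desc _ _ compat = b ≫ (PM T).σ := by
          rw [← Category.assoc, hbot, Category.assoc, hψ2]
          exact ((PM T).isPB snd b inferInstance).w
        obtain ⟨w, hw⟩ := coverX (pullback.fst (f ≫ hfront₂.desc _ _ compat) (PM T).σ)
          inferInstance (pullback.lift x a hx) (pullback.lift_fst _ _ _)
          (pullback.lift fst b hfst) (pullback.lift_fst _ _ _)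
        have hw2 : pullback.fst (f ≫ hfront₂.desc _ _ compat) (PM T).σ ≫ w = 𝟙 _ := by
          apply (cancel_mono (pullback.fst (f ≫ hfront₂.desc _ _ compat) (PM T).σ)).1
          rw [Category.assoc, hw, Category.comp_id, Category.id_comp]
        refine ⟨w ≫ pullback.snd (f ≫ hfront₂.desc _ _ compat) (PM T).σ, ?_, ?_⟩
        · calc x ≫ w ≫ pullback.snd (f ≫ hfront₂.desc _ _ compat) (PM T).σ
              = (pullback.lift x a hx ≫ pullback.fst (f ≫ hfront₂.desc _ _ compat) (PM T).σ) ≫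
                w ≫ pullback.snd (f ≫ hfront₂.desc _ _ compat) (PM T).σ := by
                rw [pullback.lift_fst]
            _ = pullback.lift x a hx ≫
                (pullback.fst (f ≫ hfront₂.desc _ _ compat) (PM T).σ ≫ w) ≫
                pullback.snd (f ≫ hfront₂.desc _ _ compat) (PM T).σ := by
                simp only [Category.assoc]
            _ = a := by rw [hw2, Category.id_comp, pullback.lift_snd]
        · calc fst ≫ w ≫ pullback.snd (f ≫ hfront₂.desc _ _ compat) (PM T).σ
              = (pullback.lift fst b hfst ≫ pullback.fst (f ≫ hfront₂.desc _ _ compat) (PM T).σ) ≫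
                w ≫ pullback.snd (f ≫ hfront₂.desc _ _ compat) (PM T).σ := by
                rw [pullback.lift_fst]
            _ = pullback.lift fst b hfst ≫
                (pullback.fst (f ≫ hfront₂.desc _ _ compat) (PM T).σ ≫ w) ≫
                pullback.snd (f ≫ hfront₂.desc _ _ compat) (PM T).σ := by
                simp only [Category.assoc]
            _ = b := by rw [hw2, Category.id_comp, pullback.lift_snd]
      have uq : ∀ {T : 𝒞} (d₁ d₂ : X ⟶ T), x ≫ d₁ = x ≫ d₂ → fst ≫ d₁ = fst ≫ d₂ →
          d₁ = d₂ := by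
        intro T d₁ d₂ h1 h2
        obtain ⟨w, hw⟩ := coverX (equalizer.ι d₁ d₂) inferInstance
          (equalizer.lift x h1) (equalizer.lift_ι _ _) (equalizer.lift fst h2)
          (equalizer.lift_ι _ _)
        calc d₁ = (w ≫ equalizer.ι d₁ d₂) ≫ d₁ := by rw [hw, Category.id_comp]
          _ = w ≫ equalizer.ι d₁ d₂ ≫ d₂ := by rw [Category.assoc, equalizer.condition]
          _ = d₂ := by rw [← Category.assoc, hw, Category.id_comp]
      have comm : CommSq fst' p x fst := ⟨hback₁⟩
      exact IsPushout.of_isColimit' comm (PushoutCocone.IsColimit.mk comm.w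
        (fun s => (mk s.inl s.inr s.condition).choose)
        (fun s => (mk s.inl s.inr s.condition).choose_spec.1)
        (fun s => (mk s.inl s.inr s.condition).choose_spec.2)
        (fun s m hm1 hm2 => uq _ _
          (by rw [hm1, (mk s.inl s.inr s.condition).choose_spec.1])
          (by rw [hm2, (mk s.inl s.inr s.condition).choose_spec.2])))
    · -- back face 2 is a pushout
      have mk : ∀ {T : 𝒞} (a : Y' ⟶ T) (b : P ⟶ T), snd' ≫ a = p ≫ b →
          ∃ d : Y ⟶ T, y ≫ d = a ∧ snd ≫ d = b := by
        intro T a b hab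
        haveI : Mono (PM T).σ := (PM T).mono_σ
        have e1 : x ≫ (PM T).cl fst b inferInstance = (PM T).cl fst' (p ≫ b) inferInstance :=
          (PM T).comp fst b inferInstance fst' (p ≫ b) inferInstance x p BP1.flip rfl
        have e2 : f' ≫ (PM T).cl g' a inferInstance = (PM T).cl fst' (p ≫ b) inferInstance := by
          have h0 : f' ≫ (PM T).cl g' a inferInstance
              = (PM T).cl fst' (snd' ≫ a) inferInstance :=
            (PM T).comp g' a inferInstance fst' (snd' ≫ a) inferInstance f' snd' htop.flip rfl
          rwa [hab] at h0
        have compat : f' ≫ (PM T).cl g' a inferInstance = x ≫ (PM T).cl fst b inferInstance := by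
          rw [e1, e2]
        have hψ1 : z ≫ hfront₁.desc _ _ compat = (PM T).cl g' a inferInstance :=
          hfront₁.inl_desc _ _ compat
        have hψ2 : f ≫ hfront₁.desc _ _ compat = (PM T).cl fst b inferInstance :=
          hfront₁.inr_desc _ _ compat
        have hy : y ≫ g ≫ hfront₁.desc _ _ compat = a ≫ (PM T).σ := by
          rw [← Category.assoc, ← hfront₂.w, Category.assoc, hψ1]
          exact ((PM T).isPB g' a inferInstance).w
        have hsnd : snd ≫ g ≫ hfront₁.desc _ _ compat = b ≫ (PM T).σ := by
          rw [← Category.assoc, ← hbot, Category.assoc, hψ2]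
          exact ((PM T).isPB fst b inferInstance).w
        obtain ⟨w, hw⟩ := coverY (pullback.fst (g ≫ hfront₁.desc _ _ compat) (PM T).σ)
          inferInstance (pullback.lift y a hy) (pullback.lift_fst _ _ _)
          (pullback.lift snd b hsnd) (pullback.lift_fst _ _ _)
        have hw2 : pullback.fst (g ≫ hfront₁.desc _ _ compat) (PM T).σ ≫ w = 𝟙 _ := by
          apply (cancel_mono (pullback.fst (g ≫ hfront₁.desc _ _ compat) (PM T).σ)).1
          rw [Category.assoc, hw, Category.comp_id, Category.id_comp]
        refine ⟨w ≫ pullback.snd (g ≫ hfront₁.desc _ _ compat) (PM T).σ, ?_, ?_⟩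
        · calc y ≫ w ≫ pullback.snd (g ≫ hfront₁.desc _ _ compat) (PM T).σ
              = (pullback.lift y a hy ≫ pullback.fst (g ≫ hfront₁.desc _ _ compat) (PM T).σ) ≫
                w ≫ pullback.snd (g ≫ hfront₁.desc _ _ compat) (PM T).σ := by
                rw [pullback.lift_fst]
            _ = pullback.lift y a hy ≫
                (pullback.fst (g ≫ hfront₁.desc _ _ compat) (PM T).σ ≫ w) ≫
                pullback.snd (g ≫ hfront₁.desc _ _ compat) (PM T).σ := by
                simp only [Category.assoc]
            _ = a := by rw [hw2, Category.id_comp, pullback.lift_snd]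
        · calc snd ≫ w ≫ pullback.snd (g ≫ hfront₁.desc _ _ compat) (PM T).σ
              = (pullback.lift snd b hsnd ≫ pullback.fst (g ≫ hfront₁.desc _ _ compat) (PM T).σ) ≫
                w ≫ pullback.snd (g ≫ hfront₁.desc _ _ compat) (PM T).σ := by
                rw [pullback.lift_fst]
            _ = pullback.lift snd b hsnd ≫
                (pullback.fst (g ≫ hfront₁.desc _ _ compat) (PM T).σ ≫ w) ≫
                pullback.snd (g ≫ hfront₁.desc _ _ compat) (PM T).σ := by
                simp only [Category.assoc]
            _ = b := by rw [hw2, Category.id_comp, pullback.lift_snd]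
      have uq : ∀ {T : 𝒞} (d₁ d₂ : Y ⟶ T), y ≫ d₁ = y ≫ d₂ → snd ≫ d₁ = snd ≫ d₂ →
          d₁ = d₂ := by
        intro T d₁ d₂ h1 h2
        obtain ⟨w, hw⟩ := coverY (equalizer.ι d₁ d₂) inferInstance
          (equalizer.lift y h1) (equalizer.lift_ι _ _) (equalizer.lift snd h2)
          (equalizer.lift_ι _ _)
        calc d₁ = (w ≫ equalizer.ι d₁ d₂) ≫ d₁ := by rw [hw, Category.id_comp]
          _ = w ≫ equalizer.ι d₁ d₂ ≫ d₂ := by rw [Category.assoc, equalizer.condition]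
          _ = d₂ := by rw [← Category.assoc, hw, Category.id_comp]
      have comm : CommSq snd' p y snd := ⟨hback₂⟩
      exact IsPushout.of_isColimit' comm (PushoutCocone.IsColimit.mk comm.w
        (fun s => (mk s.inl s.inr s.condition).choose)
        (fun s => (mk s.inl s.inr s.condition).choose_spec.1)
        (fun s => (mk s.inl s.inr s.condition).choose_spec.2)
        (fun s m hm1 hm2 => uq _ _
          (by rw [hm1, (mk s.inl s.inr s.condition).choose_spec.1])
          (by rw [hm2, (mk s.inl s.inr s.condition).choose_spec.2])))
  · -- back faces pushouts ⟹ bottom pullback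
    rintro ⟨hb1, hb2⟩
    have hB1pb : IsPullback fst' p x fst := S1 inferInstance hb1
    have eqz : z ≫ C.χ g inferInstance = C.χ g' inferInstance :=
      C.comp inferInstance inferInstance hF2.flip
    have eqf' : f' ≫ C.χ g' inferInstance = C.χ fst' inferInstance :=
      C.comp inferInstance inferInstance htop.flip
    have eqx : x ≫ C.χ fst inferInstance = C.χ fst' inferInstance :=
      C.comp inferInstance inferInstance hB1pb.flip
    have key : f ≫ C.χ g inferInstance = C.χ fst inferInstance := by
      apply hb1.hom_ext
      · rw [← Category.assoc, ← hfront₁.w, Category.assoc, eqz, eqf', eqx]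
      · rw [← Category.assoc, hbot, Category.assoc, C.w g, C.w fst, ← Category.assoc,
          terminal.comp_from]
    have big : IsPullback fst (snd ≫ terminal.from Y) (f ≫ C.χ g inferInstance) C.t := by
      have h0 := C.isPB fst inferInstance
      rw [← key] at h0
      rwa [show terminal.from P = snd ≫ terminal.from Y from (terminal.comp_from snd).symm] at h0
    exact IsPullback.of_bot big hbot (C.isPB g inferInstance)
end
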